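/- arXiv:1310.8371 — 4 statements merged into one kernel-verified Lean document; each statement's English description precedes it below -/
import Mathlib

section
/- Let a, b, c, h ∈ ℂ with 0 ≤ Re(a) < 1 and b ≠ 1, and let M = M(c, h) be the Verma module over the Neveu–Schwarz algebra with highest weight vector u of highest weight (c, h). Then the tensor product module M ⊗ SA'_{a,b} is reducible: it possesses a submodule different from 0 and from the whole module. -/
noncomputable section

open Submodule

/-- The underlying data of a `ℤ/2`-graded complex vector space equipped with
operators `L m` (`m ∈ ℤ`) and `G k` (`k ∈ ℤ`, where `G k` represents the
operator `G_{k+1/2}` indexed by the half-integer `k + 1/2`). -/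
structure PreNSMod where
  carrier : Type
  [acg : AddCommGroup carrier]
  [mod : Module ℂ carrier]
  even : Submodule ℂ carrier
  odd : Submodule ℂ carrier
  compl : IsCompl even odd
  L : ℤ → carrier →ₗ[ℂ] carrier
  G : ℤ → carrier →ₗ[ℂ] carrier

attribute [instance] PreNSMod.acg PreNSMod.mod

/-- A Neveu–Schwarz module of central charge `c`. -/
structure NSMod (c : ℂ) extends PreNSMod where
  mapsL_even : ∀ (m : ℤ), ∀ v ∈ even, L m v ∈ even
  mapsL_odd : ∀ (m : ℤ), ∀ v ∈ odd, L m v ∈ odd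
  mapsG_even : ∀ (k : ℤ), ∀ v ∈ even, G k v ∈ odd
  mapsG_odd : ∀ (k : ℤ), ∀ v ∈ odd, G k v ∈ even
  rel_LL : ∀ (m n : ℤ) (v : carrier),
    L m (L n v) - L n (L m v)
      = ((n : ℂ) - (m : ℂ)) • L (m + n) v
        + (if m + n = 0 then (((m : ℂ) ^ 3 - (m : ℂ)) / 12) * c else 0) • v
  rel_LG : ∀ (m k : ℤ) (v : carrier),
    L m (G k v) - G k (L m v) = (((k : ℂ) + 1 / 2) - (m : ℂ) / 2) • G (m + k) v
  rel_GG : ∀ (k l : ℤ) (v : carrier),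
    G k (G l v) + G l (G k v)
      = (2 : ℂ) • L (k + l + 1) v
        - (if k + l + 1 = 0 then (1 / 3) * (((k : ℂ) + 1 / 2) ^ 2 - 1 / 4) * c else 0) • v

/-- A submodule (invariant subspace) of a Neveu–Schwarz module. -/
def NSMod.IsSubmodule {c : ℂ} (S : NSMod c) (W : Submodule ℂ S.carrier) : Prop :=
  (∀ (m : ℤ), ∀ v ∈ W, S.L m v ∈ W) ∧ (∀ (k : ℤ), ∀ v ∈ W, S.G k v ∈ W)

/-- Simplicity (irreducibility) of a Neveu–Schwarz module. -/
def NSMod.IsSimple {c : ℂ} (S : NSMod c) : Prop :=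
  (∃ v : S.carrier, v ≠ 0) ∧
    ∀ W : Submodule ℂ S.carrier, S.IsSubmodule W → W = ⊥ ∨ W = ⊤

/-- `W` is a nonzero submodule which is simple as a module (it has no invariant
subspaces other than `⊥` and itself). -/
def NSMod.IsSimpleSubmodule {c : ℂ} (S : NSMod c) (W : Submodule ℂ S.carrier) : Prop :=
  S.IsSubmodule W ∧ W ≠ ⊥ ∧
    ∀ W' : Submodule ℂ S.carrier, S.IsSubmodule W' → W' ≤ W → W' = ⊥ ∨ W' = W

/-- A homomorphism of Neveu–Schwarz modules: a linear map commuting with all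
the operators `L m` and `G k`. -/
structure NSHom {c c' : ℂ} (S : NSMod c) (T : NSMod c') where
  toFun : S.carrier →ₗ[ℂ] T.carrier
  commL : ∀ (m : ℤ) (v : S.carrier), toFun (S.L m v) = T.L m (toFun v)
  commG : ∀ (k : ℤ) (v : S.carrier), toFun (S.G k v) = T.G k (toFun v)

/-- Two Neveu–Schwarz modules are isomorphic if there is a bijective
homomorphism between them. -/
def NSIso {c c' : ℂ} (S : NSMod c) (T : NSMod c') : Prop :=
  ∃ f : NSHom S T, Function.Bijective f.toFun

/-- A realization of the intermediate series module `SA_{a,b}` inside a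
Neveu–Schwarz module `S` of central charge `0`: a basis `x j` (`j ∈ ℤ`, even)
and `y j` (`j ∈ ℤ`, representing `y_{j+1/2}`, odd) on which the operators act
by the defining formulas of `SA_{a,b}`. -/
structure SAFamily (a b : ℂ) (S : NSMod 0) where
  x : ℤ → S.carrier
  y : ℤ → S.carrier
  x_even : ∀ j : ℤ, x j ∈ S.even
  y_odd : ∀ j : ℤ, y j ∈ S.odd
  indep : LinearIndependent ℂ (Sum.elim x y)
  spans : Submodule.span ℂ (Set.range x ∪ Set.range y) = ⊤
  act_Lx : ∀ i j : ℤ, S.L i (x j) = (a + (j : ℂ) + (i : ℂ) * b) • x (i + j)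
  act_Ly : ∀ i j : ℤ,
    S.L i (y j) = (a + 1 / 2 + (j : ℂ) + (i : ℂ) * (b - 1 / 2)) • y (i + j)
  act_Gx : ∀ i j : ℤ, S.G i (x j) = y (i + j)
  act_Gy : ∀ i j : ℤ,
    S.G i (y j) = (a + 1 / 2 + (j : ℂ) + (2 * (i : ℂ) + 1) * (b - 1 / 2)) • x (i + j + 1)

/-- A realization of the intermediate series module `SA'_{a,b}` (for
`0 ≤ Re a < 1`, `b ≠ 1`) inside a Neveu–Schwarz module `S` of central
charge `0`.  For `(a,b) ≠ (1/2,1/2)` this is `SA_{a,b}` itself; for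
`(a,b) = (1/2,1/2)` it is the quotient `SA_{1/2,1/2}/ℂ·y_{-1/2}`, in which
the image of `y_{-1/2}` (here `y (-1)`) is zero and the remaining vectors
form a basis.  The action formulas hold verbatim in both cases. -/
structure SA'Family (a b : ℂ) (S : NSMod 0) where
  x : ℤ → S.carrier
  y : ℤ → S.carrier
  x_even : ∀ j : ℤ, x j ∈ S.even
  y_odd : ∀ j : ℤ, y j ∈ S.odd
  spans : Submodule.span ℂ (Set.range x ∪ Set.range y) = ⊤
  indep_special : a = 1 / 2 ∧ b = 1 / 2 →
    y (-1) = 0 ∧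
      LinearIndependent ℂ (Sum.elim x (fun j : {j : ℤ // j ≠ -1} => y j.1))
  indep_generic : ¬(a = 1 / 2 ∧ b = 1 / 2) → LinearIndependent ℂ (Sum.elim x y)
  act_Lx : ∀ i j : ℤ, S.L i (x j) = (a + (j : ℂ) + (i : ℂ) * b) • x (i + j)
  act_Ly : ∀ i j : ℤ,
    S.L i (y j) = (a + 1 / 2 + (j : ℂ) + (i : ℂ) * (b - 1 / 2)) • y (i + j)
  act_Gx : ∀ i j : ℤ, S.G i (x j) = y (i + j)
  act_Gy : ∀ i j : ℤ,
    S.G i (y j) = (a + 1 / 2 + (j : ℂ) + (2 * (i : ℂ) + 1) * (b - 1 / 2)) • x (i + j + 1)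

/-- `u` is a highest weight vector of weight `(c,h)` generating the
Neveu–Schwarz module `S` (of central charge `c`). -/
structure IsHW {c : ℂ} (h : ℂ) (S : NSMod c) (u : S.carrier) : Prop where
  ne_zero : u ≠ 0
  mem_even : u ∈ S.even
  hw0 : S.L 0 u = h • u
  hwL : ∀ n : ℤ, 1 ≤ n → S.L n u = 0
  hwG : ∀ k : ℤ, 0 ≤ k → S.G k u = 0
  gen : ∀ W : Submodule ℂ S.carrier, S.IsSubmodule W → u ∈ W → W = ⊤

/-- A realization of the tensor product Neveu–Schwarz module `V ⊗ S` (with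
`V` of central charge `c` and `S` of central charge `0`) as a Neveu–Schwarz
module `T` of central charge `c`, via the bilinear map `t`. -/
structure TensorWitness {c : ℂ} (V : NSMod c) (S : NSMod 0) (T : NSMod c) where
  t : V.carrier →ₗ[ℂ] S.carrier →ₗ[ℂ] T.carrier
  isTensor : IsTensorProduct t
  grade_ee : ∀ v ∈ V.even, ∀ w ∈ S.even, t v w ∈ T.even
  grade_oo : ∀ v ∈ V.odd, ∀ w ∈ S.odd, t v w ∈ T.even
  grade_eo : ∀ v ∈ V.even, ∀ w ∈ S.odd, t v w ∈ T.odd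
  grade_oe : ∀ v ∈ V.odd, ∀ w ∈ S.even, t v w ∈ T.odd
  actL : ∀ (m : ℤ) (v : V.carrier) (w : S.carrier),
    T.L m (t v w) = t (V.L m v) w + t v (S.L m w)
  actG_even : ∀ (k : ℤ), ∀ v ∈ V.even, ∀ w : S.carrier,
    T.G k (t v w) = t (V.G k v) w + t v (S.G k w)
  actG_odd : ∀ (k : ℤ), ∀ v ∈ V.odd, ∀ w : S.carrier,
    T.G k (t v w) = t (V.G k v) w - t v (S.G k w)

/-- The PBW monomial `L_{-n₁} ⋯ L_{-n_p} G_{-r₁} ⋯ G_{-r_q} u`, where the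
second list records each half-integer `r = k - 1/2` by the integer `k`
(so that `G_{-r}` is the operator `G (-k)`). -/
def vermaMonomial {c : ℂ} (M : NSMod c) (u : M.carrier) (p : List ℤ × List ℤ) :
    M.carrier :=
  (p.1.map fun n => M.L (-n)).foldr (fun f v => f v)
    ((p.2.map fun k => M.G (-k)).foldr (fun f v => f v) u)

/-- The index set for the PBW basis of a Verma module: weakly decreasing lists
of positive integers `n₁ ≥ ⋯ ≥ n_p ≥ 1`, together with strictly decreasing
lists of positive half-integers `r₁ > ⋯ > r_q > 0` (with `r = k - 1/2`
recorded by the integer `k ≥ 1`). -/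
def VermaIndex : Type :=
  {p : List ℤ × List ℤ //
    p.1.Chain' (· ≥ ·) ∧ (∀ n ∈ p.1, 1 ≤ n) ∧
      p.2.Chain' (· > ·) ∧ (∀ k ∈ p.2, 1 ≤ k)}

/-- `M` is the Verma module of highest weight `(c,h)` with highest weight
vector `u`: the PBW monomials in the negative-mode operators applied to `u`
form a basis of `M`. -/
def IsVerma {c : ℂ} (h : ℂ) (M : NSMod c) (u : M.carrier) : Prop :=
  IsHW h M u ∧
    LinearIndependent ℂ (fun p : VermaIndex => vermaMonomial M u p.1) ∧
    Submodule.span ℂ (Set.range fun p : VermaIndex => vermaMonomial M u p.1) = ⊤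

/-- The grading assumption on a highest weight module `V` of highest weight
`(c,h)`: `V = ⨁_{n ∈ ℕ} V_{h-n/2}` where `D n = V_{h-n/2}` is the
`L₀`-eigenspace with eigenvalue `h - n/2`, contained in the even part for
`n` even and the odd part for `n` odd, and `u ∈ D 0`. -/
structure GradedHW {c : ℂ} (h : ℂ) (V : NSMod c) (u : V.carrier)
    (D : ℕ → Submodule ℂ V.carrier) : Prop where
  hw : IsHW h V u
  u_mem : u ∈ D 0
  internal : DirectSum.IsInternal D
  eig : ∀ (n : ℕ), ∀ v ∈ D n, V.L 0 v = (h - (n : ℂ) / 2) • v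
  even_part : ∀ n : ℕ, Even n → D n ≤ V.even
  odd_part : ∀ n : ℕ, Odd n → D n ≤ V.odd

/-- A realization of the shifted module `V ⊗ ℂ[t^{±1/2}]` on the graded
vector space `Sh`.  Here `ι p v` represents `v ⊗ t^{p/2}` (half-integers
`s ∈ (1/2)ℤ` are recorded by integers `p` with `s = p/2`), and `D n` is the
weight space `V_{h - n/2}` (so `d = -n/2`).  The case distinction
`s + d ∈ ℤ` versus `s + d ∈ ℤ + 1/2` becomes `2 ∣ (p - n)` versus its
negation. -/
structure ShiftedWitness (a b : ℂ) {c : ℂ} (V : NSMod c)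
    (D : ℕ → Submodule ℂ V.carrier) (Sh : PreNSMod) where
  ι : ℤ → V.carrier →ₗ[ℂ] Sh.carrier
  directSum : Function.Bijective
    (Finsupp.lsum ℂ ι : (ℤ →₀ V.carrier) →ₗ[ℂ] Sh.carrier)
  grade_even : ∀ p : ℤ, (2 : ℤ) ∣ p → ∀ v : V.carrier, ι p v ∈ Sh.even
  grade_odd : ∀ p : ℤ, ¬(2 : ℤ) ∣ p → ∀ v : V.carrier, ι p v ∈ Sh.odd
  actL : ∀ (k p : ℤ) (n : ℕ), ∀ v ∈ D n,
    Sh.L k (ι p v) = ι (p + 2 * k) (V.L k v)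
      + (if (2 : ℤ) ∣ (p - (n : ℤ))
          then a + (p : ℂ) / 2 + (k : ℂ) * b + (n : ℂ) / 2
          else a + (p : ℂ) / 2 + (k : ℂ) * (b - 1 / 2) + (n : ℂ) / 2) •
            ι (p + 2 * k) v
  actG : ∀ (k p : ℤ) (n : ℕ), ∀ v ∈ D n,
    Sh.G k (ι p v) = ι (p + 2 * k + 1) (V.G k v)
      + ((-1 : ℂ) ^ n *
          (if (2 : ℤ) ∣ (p - (n : ℤ)) then 1
            else a + (p : ℂ) / 2 + (2 * (k : ℂ) + 1) * (b - 1 / 2) + (n : ℂ) / 2)) •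
            ι (p + 2 * k + 1) v

/-- A realization of the *reduced* shifted module: the quotient of the
shifted module `V ⊗ ℂ[t^{±1/2}]` by the copy of `V` spanned by the vectors
`v ⊗ t^{d - 1/2}` (`v ∈ V_{h+d}`) when `(a,b) = (1/2,1/2)`, and the shifted
module itself otherwise. -/
structure RedShiftedWitness (a b : ℂ) {c : ℂ} (V : NSMod c)
    (D : ℕ → Submodule ℂ V.carrier) (R : NSMod c) where
  ι : ℤ → V.carrier →ₗ[ℂ] R.carrier
  surj : Function.Surjective
    (Finsupp.lsum ℂ ι : (ℤ →₀ V.carrier) →ₗ[ℂ] R.carrier)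
  ker_special : a = 1 / 2 ∧ b = 1 / 2 →
    LinearMap.ker (Finsupp.lsum ℂ ι : (ℤ →₀ V.carrier) →ₗ[ℂ] R.carrier)
      = Submodule.span ℂ
          {w : ℤ →₀ V.carrier | ∃ n : ℕ, ∃ v ∈ D n, w = Finsupp.single (-(n : ℤ) - 1) v}
  ker_generic : ¬(a = 1 / 2 ∧ b = 1 / 2) →
    LinearMap.ker (Finsupp.lsum ℂ ι : (ℤ →₀ V.carrier) →ₗ[ℂ] R.carrier) = ⊥
  grade_even : ∀ p : ℤ, (2 : ℤ) ∣ p → ∀ v : V.carrier, ι p v ∈ R.even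
  grade_odd : ∀ p : ℤ, ¬(2 : ℤ) ∣ p → ∀ v : V.carrier, ι p v ∈ R.odd
  actL : ∀ (k p : ℤ) (n : ℕ), ∀ v ∈ D n,
    R.L k (ι p v) = ι (p + 2 * k) (V.L k v)
      + (if (2 : ℤ) ∣ (p - (n : ℤ))
          then a + (p : ℂ) / 2 + (k : ℂ) * b + (n : ℂ) / 2
          else a + (p : ℂ) / 2 + (k : ℂ) * (b - 1 / 2) + (n : ℂ) / 2) •
            ι (p + 2 * k) v
  actG : ∀ (k p : ℤ) (n : ℕ), ∀ v ∈ D n,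
    R.G k (ι p v) = ι (p + 2 * k + 1) (V.G k v)
      + ((-1 : ℂ) ^ n *
          (if (2 : ℤ) ∣ (p - (n : ℤ)) then 1
            else a + (p : ℂ) / 2 + (2 * (k : ℂ) + 1) * (b - 1 / 2) + (n : ℂ) / 2)) •
            ι (p + 2 * k + 1) v

/-- `φ` is a shifted character at level `s = p/2` on the Verma module `M`
with grading `D` and highest weight vector `u`:  `φ u = 1` and `φ` satisfies
the defining recursions on homogeneous vectors (`w ∈ D n` means
`L₀ w = (h + d) w` with `d = -n/2` and `w` of parity `n mod 2`; the operator
`G (-j)` is `G_{-r}` with `r = j - 1/2 > 0`). -/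
def IsShiftedChar (a b : ℂ) {c : ℂ} (M : NSMod c)
    (D : ℕ → Submodule ℂ M.carrier) (u : M.carrier) (p : ℤ)
    (φ : M.carrier →ₗ[ℂ] ℂ) : Prop :=
  φ u = 1 ∧
    (∀ (n : ℕ), ∀ w ∈ D n, ∀ k : ℤ, 1 ≤ k →
      φ (M.L (-k) w)
        = (if (2 : ℤ) ∣ (p - (n : ℤ))
            then -(a + (p : ℂ) / 2 + (k : ℂ) - (k : ℂ) * b + (n : ℂ) / 2)
            else -(a + (p : ℂ) / 2 + (k : ℂ) - (k : ℂ) * (b - 1 / 2) + (n : ℂ) / 2))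
          * φ w) ∧
    (∀ (n : ℕ), ∀ w ∈ D n, ∀ j : ℤ, 1 ≤ j →
      φ (M.G (-j) w)
        = (if (2 : ℤ) ∣ (p - (n : ℤ))
            then -(-1 : ℂ) ^ n *
              (a + (p : ℂ) / 2 + ((j : ℂ) - 1 / 2)
                - 2 * ((j : ℂ) - 1 / 2) * (b - 1 / 2) + (n : ℂ) / 2)
            else -(-1 : ℂ) ^ n)
          * φ w)
/-! ### Auxiliary machinery for Statement 8 -/

namespace VTR8

section Main

variable {cc hc : ℂ} (a b : ℂ)

/-- Operators indexed: `.inl k` stands for `L (-k)`, `.inr j` for `G (-j)`. -/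
abbrev Op : Type := ℤ ⊕ ℤ

def opIdx : Op → ℤ := Sum.elim id id

def degOp : Op → ℤ := fun o => match o with
  | .inl k => 2 * k
  | .inr j => 2 * j - 1

def degW (N : List Op) : ℤ := (N.map degOp).sum

def NegWord (N : List Op) : Prop := ∀ o ∈ N, 1 ≤ opIdx o

def good : Op → Op → Prop := fun o₁ o₂ => match o₁, o₂ with
  | .inl k₁, .inl k₂ => k₂ ≤ k₁
  | .inl _, .inr _ => True
  | .inr _, .inl _ => False
  | .inr j₁, .inr j₂ => j₂ < j₁

def oltB : Op → Op → Bool := fun o₁ o₂ => match o₁, o₂ with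
  | .inr _, .inl _ => true
  | .inl k₁, .inl k₂ => decide (k₁ < k₂)
  | .inr j₁, .inr j₂ => decide (j₁ < j₂)
  | .inl _, .inr _ => false

def normalW (N : List Op) : Prop := N.Chain' good

def invW : List Op → ℕ
  | [] => 0
  | o :: N => N.countP (oltB o) + invW N

def wordOf (P : List ℤ × List ℤ) : List Op := P.1.map .inl ++ P.2.map .inr

section Mod

variable (T : NSMod cc)

def act : Op → T.carrier →ₗ[ℂ] T.carrier := fun o => match o with
  | .inl k => T.L (-k)
  | .inr j => T.G (-j)

def wordOp (N : List Op) : T.carrier →ₗ[ℂ] T.carrier := (N.map (act T)).prod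

@[simp] lemma wordOp_nil : wordOp T [] = LinearMap.id := rfl

lemma wordOp_cons (o : Op) (N : List Op) :
    wordOp T (o :: N) = act T o * wordOp T N := by
  simp [wordOp]

lemma wordOp_append (A B : List Op) :
    wordOp T (A ++ B) = wordOp T A * wordOp T B := by
  simp [wordOp]

lemma wordOp_cons_apply (o : Op) (N : List Op) (x : T.carrier) :
    wordOp T (o :: N) x = act T o (wordOp T N x) := by
  rw [wordOp_cons]; rfl

lemma wordOp_append_apply (A B : List Op) (x : T.carrier) :
    wordOp T (A ++ B) x = wordOp T A (wordOp T B x) := by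
  rw [wordOp_append]; rfl

end Mod

end Main

end VTR8
namespace VTR8

section MSide

variable {cc : ℂ} (hc : ℂ) (M : NSMod cc) (u : M.carrier)

def mact : Op → M.carrier →ₗ[ℂ] M.carrier := fun o => match o with
  | .inl k => M.L (-k)
  | .inr j => M.G (-j)

def wordOpM (N : List Op) : M.carrier →ₗ[ℂ] M.carrier := (N.map (mact M)).prod

lemma wordOpM_cons_apply (o : Op) (N : List Op) (x : M.carrier) :
    wordOpM M (o :: N) x = mact M o (wordOpM M N x) := by
  simp [wordOpM]

/-- The `L₀`-eigenspace with eigenvalue `h - n/2`. -/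
def EE (n : ℤ) : Submodule ℂ M.carrier :=
  LinearMap.ker (M.L 0 - (hc - (n : ℂ) / 2) • LinearMap.id)

lemma mem_EE {n : ℤ} {v : M.carrier} :
    v ∈ EE hc M n ↔ M.L 0 v = (hc - (n : ℂ) / 2) • v := by
  simp [EE, LinearMap.mem_ker, sub_eq_zero]

/-- `L i` shifts eigenvalues. -/
lemma L_shift_EE (i : ℤ) {n : ℤ} {v : M.carrier} (hv : v ∈ EE hc M n) :
    M.L i v ∈ EE hc M (n - 2 * i) := by
  rw [mem_EE] at hv ⊢
  have hrel := M.rel_LL 0 i v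
  rw [zero_add, sub_eq_iff_eq_add] at hrel
  have h0 : (((0:ℤ) : ℂ) ^ 3 - ((0:ℤ) : ℂ)) / 12 * cc = 0 := by norm_num
  rw [hrel, hv, map_smul, h0, ite_self, zero_smul, add_zero, ← add_smul]
  congr 1
  push_cast
  ring

lemma G_shift_EE (i : ℤ) {n : ℤ} {v : M.carrier} (hv : v ∈ EE hc M n) :
    M.G i v ∈ EE hc M (n - 2 * i - 1) := by
  rw [mem_EE] at hv ⊢
  have hrel := M.rel_LG 0 i v
  rw [zero_add, sub_eq_iff_eq_add] at hrel
  rw [hrel, hv, map_smul, ← add_smul]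
  congr 1
  push_cast
  ring

lemma mact_shift_EE (o : Op) {n : ℤ} {v : M.carrier} (hv : v ∈ EE hc M n) :
    mact M o v ∈ EE hc M (n + degOp o) := by
  match o with
  | .inl k =>
      have := L_shift_EE hc M (-k) hv
      have e : n - 2 * (-k) = n + degOp (Sum.inl k : Op) := by simp only [degOp]; ring
      rw [e] at this
      simpa [mact] using this
  | .inr j =>
      have := G_shift_EE hc M (-j) hv
      have e : n - 2 * (-j) - 1 = n + degOp (Sum.inr j : Op) := by simp only [degOp]; ring
      rw [e] at this
      simpa [mact] using this

lemma degW_cons (o : Op) (N : List Op) : degW (o :: N) = degOp o + degW N := by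
  simp [degW]

lemma wordOpM_mem_EE (hu : M.L 0 u = hc • u) (N : List Op) :
    wordOpM M N u ∈ EE hc M (degW N) := by
  induction N with
  | nil =>
      simp only [wordOpM, List.map_nil, List.prod_nil, degW, List.sum_nil]
      rw [mem_EE]
      simpa using hu
  | cons o N ih =>
      rw [wordOpM_cons_apply]
      have := mact_shift_EE hc M o ih
      rw [degW_cons, add_comm (degOp o) (degW N)]
      exact this

/-- Parity of iterated words. -/
lemma wordOpM_parity (hu : u ∈ M.even) (N : List Op) :
    (Even (degW N) → wordOpM M N u ∈ M.even) ∧ (¬ Even (degW N) → wordOpM M N u ∈ M.odd) := by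
  induction N with
  | nil =>
      constructor
      · intro _; simpa [wordOpM] using hu
      · intro hh; exfalso; exact hh (by simp [degW])
  | cons o N ih =>
      have hdeg := degW_cons o N
      match o with
      | .inl k =>
          have hpar : Even (degW (.inl k :: N)) ↔ Even (degW N) := by
            rw [hdeg]; simp only [degOp, Int.even_add, Int.even_iff]; omega
          refine ⟨fun hE => ?_, fun hO => ?_⟩
          · rw [wordOpM_cons_apply]
            exact M.mapsL_even _ _ (ih.1 (hpar.mp hE))
          · rw [wordOpM_cons_apply]
            exact M.mapsL_odd _ _ (ih.2 (fun hE => hO (hpar.mpr hE)))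
      | .inr j =>
          have hpar : Even (degW (.inr j :: N)) ↔ ¬ Even (degW N) := by
            rw [hdeg]; simp only [degOp, Int.even_add, Int.even_sub, Int.even_iff]; omega
          refine ⟨fun hE => ?_, fun hO => ?_⟩
          · rw [wordOpM_cons_apply]
            exact M.mapsG_odd _ _ (ih.2 (hpar.mp hE))
          · rw [wordOpM_cons_apply]
            have hEN : Even (degW N) := by
              by_contra hEN
              exact hO (hpar.mpr hEN)
            exact M.mapsG_even _ _ (ih.1 hEN)

end MSide

end VTR8
namespace VTR8

section MSide2

variable {cc : ℂ} (hc : ℂ) (M : NSMod cc) (u : M.carrier)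

lemma foldr_apply_eq_prod (l : List (M.carrier →ₗ[ℂ] M.carrier)) (x : M.carrier) :
    l.foldr (fun f v => f v) x = l.prod x := by
  induction l with
  | nil => simp
  | cons f l ih => simp [List.prod_cons, Module.End.mul_apply, ih]

def monoM (P : VermaIndex) : M.carrier := vermaMonomial M u P.1

def degP (P : VermaIndex) : ℤ := degW (wordOf P.1)

lemma fold_eq (P : VermaIndex) : wordOpM M (wordOf P.1) u = monoM M u P := by
  unfold wordOpM wordOf monoM vermaMonomial
  rw [List.map_append, List.prod_append, Module.End.mul_apply]
  rw [List.map_map, List.map_map]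
  rw [foldr_apply_eq_prod, foldr_apply_eq_prod]
  rfl

lemma negWord_wordOf (P : VermaIndex) : NegWord (wordOf P.1) := by
  intro o ho
  rcases List.mem_append.mp ho with hmem | hmem
  · rcases List.mem_map.mp hmem with ⟨n, hn, rfl⟩
    simpa [opIdx] using P.2.2.1 n hn
  · rcases List.mem_map.mp hmem with ⟨k, hk, rfl⟩
    simpa [opIdx] using P.2.2.2.2 k hk

lemma degW_nonneg {N : List Op} (hN : NegWord N) : 0 ≤ degW N := by
  induction N with
  | nil => simp [degW]
  | cons o N ih =>
      rw [degW_cons]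
      have h1 : 1 ≤ opIdx o := hN o (List.mem_cons_self)
      have h2 : 0 ≤ degW N := ih (fun o' ho' => hN o' (List.mem_cons_of_mem o ho'))
      have h3 : 1 ≤ degOp o := by
        match o with
        | .inl k => simp only [degOp]; simp only [opIdx, Sum.elim_inl, id] at h1; omega
        | .inr j => simp only [degOp]; simp only [opIdx, Sum.elim_inr, id] at h1; omega
      omega

/-- Normal negative words come from Verma indices. -/
lemma normal_decomp {N : List Op} (hnorm : normalW N) (hneg : NegWord N) :
    ∃ P : VermaIndex, wordOf P.1 = N := by
  induction N with
  | nil => exact ⟨⟨([], []), List.isChain_nil, by simp, List.isChain_nil, by simp⟩, rfl⟩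
  | cons o N ih =>
      have hnorm' : normalW N := (List.isChain_cons.mp hnorm).2
      have hneg' : NegWord N := fun o' ho' => hneg o' (List.mem_cons_of_mem o ho')
      obtain ⟨⟨⟨A, B⟩, hA, hA1, hB, hB1⟩, hPN⟩ := ih hnorm' hneg'
      have hhead := (List.isChain_cons.mp hnorm).1
      simp only [wordOf] at hPN
      match o with
      | .inl k =>
          refine ⟨⟨⟨k :: A, B⟩, ?_, ?_, hB, hB1⟩, ?_⟩
          · apply List.isChain_cons.mpr
            refine ⟨?_, hA⟩
            intro y hy
            rcases A with _ | ⟨aa, A'⟩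
            · simp at hy
            · have hya : aa = y := by simpa using hy
              have hNh : N.head? = some (Sum.inl aa) := by
                rw [← hPN]; simp
              have hg : good (Sum.inl k) (Sum.inl aa) := hhead _ (by simp [Option.mem_def, hNh])
              rw [← hya]
              simpa [good] using hg
          · intro n hn
            rcases List.mem_cons.mp hn with rfl | hn
            · simpa [opIdx] using hneg (Sum.inl n) (List.mem_cons_self)
            · exact hA1 n hn
          · show List.map Sum.inl (k :: A) ++ List.map Sum.inr B = Sum.inl k :: N
            rw [List.map_cons, List.cons_append, hPN]
      | .inr j =>
          have hAnil : A = [] := by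
            rcases A with _ | ⟨aa, A'⟩
            · rfl
            · exfalso
              have hNh : N.head? = some (Sum.inl aa) := by
                rw [← hPN]; simp
              have hg : good (Sum.inr j) (Sum.inl aa) := hhead _ (by simp [Option.mem_def, hNh])
              simpa [good] using hg
          subst hAnil
          simp only [List.map_nil, List.nil_append] at hPN
          refine ⟨⟨⟨[], j :: B⟩, List.isChain_nil, by simp, ?_, ?_⟩, ?_⟩
          · apply List.isChain_cons.mpr
            refine ⟨?_, hB⟩
            intro y hy
            rcases B with _ | ⟨bb, B'⟩
            · simp at hy
            · have hya : bb = y := by simpa using hy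
              have hNh : N.head? = some (Sum.inr bb) := by
                rw [← hPN]; simp
              have hg : good (Sum.inr j) (Sum.inr bb) := hhead _ (by simp [Option.mem_def, hNh])
              rw [← hya]
              simpa [good] using hg
          · intro k hk
            rcases List.mem_cons.mp hk with rfl | hk
            · simpa [opIdx] using hneg (Sum.inr k) (List.mem_cons_self)
            · exact hB1 k hk
          · show List.map Sum.inl ([] : List ℤ) ++ List.map Sum.inr (j :: B) = Sum.inr j :: N
            rw [List.map_nil, List.nil_append, List.map_cons, hPN]

lemma mono_mem_EE (hu : M.L 0 u = hc • u) (P : VermaIndex) :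
    monoM M u P ∈ EE hc M (degP P) := by
  rw [← fold_eq]
  exact wordOpM_mem_EE hc M u hu (wordOf P.1)

/-- Span of monomials of a given degree. -/
def SS (n : ℤ) : Submodule ℂ M.carrier :=
  Submodule.span ℂ {x | ∃ P : VermaIndex, degP P = n ∧ x = monoM M u P}

/-- Eigenvectors for distinct eigenvalues are independent. -/
lemma indep_EE (Fs : Finset ℤ) (w : ℤ → M.carrier)
    (hw : ∀ d ∈ Fs, w d ∈ EE hc M d) (hsum : ∑ d ∈ Fs, w d = 0) :
    ∀ d ∈ Fs, w d = 0 := by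
  classical
  induction Fs using Finset.induction_on generalizing w with
  | empty => intro d hd; simp at hd
  | @insert d₀ Fs' hd₀ ih =>
      set Φ : M.carrier →ₗ[ℂ] M.carrier := M.L 0 - (hc - (d₀:ℂ)/2) • LinearMap.id with hΦ
      have hΦw : ∀ d ∈ insert d₀ Fs', Φ (w d) = (((d₀:ℂ) - (d:ℂ))/2) • w d := by
        intro d hd
        have hmem := (mem_EE hc M).mp (hw d hd)
        simp only [hΦ, LinearMap.sub_apply, LinearMap.smul_apply, LinearMap.id_apply]
        rw [hmem, ← sub_smul]
        congr 1
        ring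
      have happl : ∑ d ∈ insert d₀ Fs', (((d₀:ℂ) - (d:ℂ))/2) • w d = 0 := by
        calc ∑ d ∈ insert d₀ Fs', (((d₀:ℂ) - (d:ℂ))/2) • w d
            = ∑ d ∈ insert d₀ Fs', Φ (w d) :=
              Finset.sum_congr rfl (fun d hd => (hΦw d hd).symm)
          _ = Φ (∑ d ∈ insert d₀ Fs', w d) := (map_sum Φ _ _).symm
          _ = 0 := by rw [hsum, map_zero]
      rw [Finset.sum_insert hd₀, sub_self, zero_div, zero_smul, zero_add] at happl
      have hzero : ∀ d ∈ Fs', (((d₀:ℂ) - (d:ℂ))/2) • w d = 0 :=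
        ih (fun d => (((d₀:ℂ) - (d:ℂ))/2) • w d)
          (fun d hd => Submodule.smul_mem _ _ (hw d (Finset.mem_insert_of_mem hd))) happl
      have hFs' : ∀ d ∈ Fs', w d = 0 := by
        intro d hd
        have hdne : d ≠ d₀ := fun he => hd₀ (he ▸ hd)
        have hne : ((d₀:ℂ) - (d:ℂ))/2 ≠ 0 := by
          apply div_ne_zero _ two_ne_zero
          rw [sub_ne_zero]
          exact_mod_cast Ne.symm hdne
        exact (smul_eq_zero.mp (hzero d hd)).resolve_left hne
      intro d hd
      rcases Finset.mem_insert.mp hd with rfl | hd'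
      · rw [Finset.sum_insert hd₀, add_eq_zero_iff_eq_neg] at hsum
        rw [hsum, Finset.sum_eq_zero hFs', neg_zero]
      · exact hFs' d hd'

/-- Every eigenvector of eigenvalue `h - n/2` is a combination of monomials of
degree `n` (given that monomials span). -/
lemma EE_le_SS (hu : M.L 0 u = hc • u)
    (hspan : Submodule.span ℂ (Set.range fun P : VermaIndex => vermaMonomial M u P.1) = ⊤)
    {n : ℤ} {v : M.carrier} (hv : v ∈ EE hc M n) : v ∈ SS M u n := by
  classical
  have hvtop : v ∈ Submodule.span ℂ (Set.range fun P : VermaIndex => monoM M u P) := by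
    rw [show (fun P : VermaIndex => monoM M u P) = (fun P : VermaIndex => vermaMonomial M u P.1) from rfl, hspan]
    trivial
  obtain ⟨cf, hcf⟩ := (Finsupp.mem_span_range_iff_exists_finsupp).mp hvtop
  set Fs : Finset ℤ := cf.support.image (degP) with hFs
  set w : ℤ → M.carrier :=
    fun d => ∑ P ∈ cf.support.filter (fun P => degP P = d), cf P • monoM M u P with hw
  have hvsum : ∑ d ∈ Fs, w d = v := by
    calc ∑ d ∈ Fs, w d
        = ∑ P ∈ cf.support, cf P • monoM M u P :=
          Finset.sum_fiberwise_of_maps_to (fun P hP => Finset.mem_image_of_mem degP hP) _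
      _ = v := hcf
  have hwSS : ∀ d : ℤ, w d ∈ SS M u d := by
    intro d
    apply Submodule.sum_mem
    intro P hP
    apply Submodule.smul_mem
    apply Submodule.subset_span
    exact ⟨P, (Finset.mem_filter.mp hP).2, rfl⟩
  have hwEE : ∀ d : ℤ, w d ∈ EE hc M d := by
    intro d
    apply Submodule.sum_mem
    intro P hP
    have := mono_mem_EE hc M u hu P
    rw [(Finset.mem_filter.mp hP).2] at this
    exact Submodule.smul_mem _ _ this
  by_cases hn : n ∈ Fs
  · -- subtract v from the n-component
    set g : ℤ → M.carrier := fun d => if d = n then w n - v else w d with hg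
    have hgsum : ∑ d ∈ Fs, g d = 0 := by
      have : ∑ d ∈ Fs, g d = (∑ d ∈ Fs, w d) - v := by
        rw [Finset.sum_eq_sum_sdiff_singleton_add hn g,
            Finset.sum_eq_sum_sdiff_singleton_add hn w]
        have h1 : ∑ d ∈ Fs \ {n}, g d = ∑ d ∈ Fs \ {n}, w d := by
          apply Finset.sum_congr rfl
          intro d hd
          have : d ≠ n := by
            intro he; exact (Finset.mem_sdiff.mp hd).2 (by simp [he])
          simp [hg, this]
        rw [h1]
        simp [hg]
        abel
      rw [this, hvsum, sub_self]
    have hgEE : ∀ d ∈ Fs, g d ∈ EE hc M d := by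
      intro d hd
      by_cases hdn : d = n
      · subst hdn; simp only [hg, if_pos rfl]; exact Submodule.sub_mem _ (hwEE d) hv
      · simp only [hg, if_neg hdn]; exact hwEE d
    have := indep_EE hc M Fs g hgEE hgsum n hn
    simp only [hg, if_pos rfl, sub_eq_zero] at this
    rw [← this]
    exact hwSS n
  · set g : ℤ → M.carrier := fun d => if d = n then -v else w d with hg
    have hgsum : ∑ d ∈ insert n Fs, g d = 0 := by
      rw [Finset.sum_insert hn]
      have h1 : ∑ d ∈ Fs, g d = ∑ d ∈ Fs, w d := by
        apply Finset.sum_congr rfl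
        intro d hd
        have : d ≠ n := fun he => hn (he ▸ hd)
        simp [hg, this]
      rw [h1, hvsum]
      simp [hg]
    have hgEE : ∀ d ∈ insert n Fs, g d ∈ EE hc M d := by
      intro d hd
      by_cases hdn : d = n
      · subst hdn; simp only [hg, if_pos rfl]; exact Submodule.neg_mem _ hv
      · simp only [hg, if_neg hdn]; exact hwEE d
    have := indep_EE hc M (insert n Fs) g hgEE hgsum n (Finset.mem_insert_self n Fs)
    simp only [hg, if_pos rfl, neg_eq_zero] at this
    rw [this]
    exact Submodule.zero_mem _

end MSide2

end VTR8
namespace VTR8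

section SSide

variable (a b : ℂ) (S : NSMod 0) (F : SA'Family a b S)

def vv (q : ℤ) : S.carrier := if 2 ∣ q then F.x (q/2) else F.y ((q-1)/2)

lemma vv_even (j : ℤ) : vv a b S F (2*j) = F.x j := by
  have h2 : (2:ℤ) ∣ 2*j := ⟨j, rfl⟩
  simp only [vv, if_pos h2]
  congr 1
  omega

lemma vv_odd (j : ℤ) : vv a b S F (2*j+1) = F.y j := by
  have h2 : ¬ (2:ℤ) ∣ 2*j+1 := by omega
  simp only [vv, if_neg h2]
  congr 1
  omega

lemma vv_cases (q : ℤ) :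
    (∃ j, q = 2*j ∧ vv a b S F q = F.x j) ∨ (∃ j, q = 2*j+1 ∧ vv a b S F q = F.y j) := by
  rcases Int.even_or_odd q with ⟨j, hj⟩ | ⟨j, hj⟩
  · exact Or.inl ⟨j, by omega, by rw [show q = 2*j by omega, vv_even]⟩
  · exact Or.inr ⟨j, by omega, by rw [show q = 2*j+1 by omega, vv_odd]⟩

lemma S_L_vv (i q : ℤ) : ∃ s : ℂ, S.L i (vv a b S F q) = s • vv a b S F (q + 2*i) := by
  rcases vv_cases a b S F q with ⟨j, hq, hv⟩ | ⟨j, hq, hv⟩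
  · refine ⟨a + (j:ℂ) + (i:ℂ) * b, ?_⟩
    rw [hv, F.act_Lx i j, show q + 2*i = 2*(i+j) by omega, vv_even]
  · refine ⟨a + 1/2 + (j:ℂ) + (i:ℂ) * (b - 1/2), ?_⟩
    rw [hv, F.act_Ly i j, show q + 2*i = 2*(i+j)+1 by omega, vv_odd]

lemma S_G_vv (i q : ℤ) : ∃ s : ℂ, S.G i (vv a b S F q) = s • vv a b S F (q + 2*i + 1) := by
  rcases vv_cases a b S F q with ⟨j, hq, hv⟩ | ⟨j, hq, hv⟩
  · refine ⟨1, ?_⟩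
    rw [hv, F.act_Gx i j, show q + 2*i + 1 = 2*(i+j)+1 by omega, vv_odd, one_smul]
  · refine ⟨a + 1/2 + (j:ℂ) + (2*(i:ℂ)+1) * (b - 1/2), ?_⟩
    rw [hv, F.act_Gy i j, show q + 2*i + 1 = 2*(i+j+1) by omega, vv_even]

lemma vv_eq_even {q : ℤ} (h2 : 2 ∣ q) : vv a b S F q = F.x (q/2) := by
  conv_lhs => rw [show q = 2*(q/2) by omega]
  rw [vv_even]

lemma vv_eq_odd {q : ℤ} (h2 : ¬ 2 ∣ q) : vv a b S F q = F.y ((q-1)/2) := by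
  conv_lhs => rw [show q = 2*((q-1)/2)+1 by omega]
  rw [vv_odd]

/-- A coordinate functional at `v_{p₀}` for `p₀ ≥ 0`. -/
lemma exists_coordS (p₀ : ℤ) (hp₀ : 0 ≤ p₀) :
    ∃ g : S.carrier →ₗ[ℂ] ℂ, g (vv a b S F p₀) = 1 ∧ ∀ q : ℤ, q ≠ p₀ → g (vv a b S F q) = 0 := by
  classical
  by_cases hsp : a = 1/2 ∧ b = 1/2
  · obtain ⟨hym1, hind⟩ := F.indep_special hsp
    have hspan' : ⊤ ≤ Submodule.span ℂ
        (Set.range (Sum.elim F.x (fun j : {j : ℤ // j ≠ -1} => F.y j.1))) := by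
      rw [← F.spans]
      apply Submodule.span_le.mpr
      rintro z (⟨j, rfl⟩ | ⟨j, rfl⟩)
      · exact Submodule.subset_span ⟨Sum.inl j, rfl⟩
      · by_cases hj : j = -1
        · rw [hj, hym1]; exact Submodule.zero_mem _
        · exact Submodule.subset_span ⟨Sum.inr ⟨j, hj⟩, rfl⟩
    set bS := Module.Basis.mk hind hspan' with hbS
    have hbS_inl : ∀ j : ℤ, bS (Sum.inl j) = F.x j := by
      intro j; rw [hbS, Module.Basis.mk_apply]; rfl
    have hbS_inr : ∀ j : {j : ℤ // j ≠ -1}, bS (Sum.inr j) = F.y j.1 := by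
      intro j; rw [hbS, Module.Basis.mk_apply]; rfl
    by_cases h2 : 2 ∣ p₀
    · refine ⟨bS.coord (Sum.inl (p₀/2)), ?_, ?_⟩
      · rw [vv_eq_even a b S F h2, ← hbS_inl]
        simp [Module.Basis.coord_apply, Module.Basis.repr_self]
      · intro q hq
        rcases vv_cases a b S F q with ⟨j, hqj, hv⟩ | ⟨j, hqj, hv⟩
        · rw [hv, ← hbS_inl, Module.Basis.coord_apply, Module.Basis.repr_self]
          have hne : j ≠ p₀/2 := by omega
          simp [Finsupp.single_apply, hne]
        · by_cases hj : j = -1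
          · rw [hv, hj, hym1, map_zero]
          · rw [hv, ← hbS_inr ⟨j, hj⟩, Module.Basis.coord_apply, Module.Basis.repr_self]
            simp [Finsupp.single_apply]
    · have hj0 : (p₀ - 1)/2 ≠ -1 := by omega
      refine ⟨bS.coord (Sum.inr ⟨(p₀-1)/2, hj0⟩), ?_, ?_⟩
      · rw [vv_eq_odd a b S F h2, ← hbS_inr ⟨(p₀-1)/2, hj0⟩]
        simp [Module.Basis.coord_apply, Module.Basis.repr_self]
      · intro q hq
        rcases vv_cases a b S F q with ⟨j, hqj, hv⟩ | ⟨j, hqj, hv⟩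
        · rw [hv, ← hbS_inl, Module.Basis.coord_apply, Module.Basis.repr_self]
          simp [Finsupp.single_apply]
        · by_cases hj : j = -1
          · rw [hv, hj, hym1, map_zero]
          · rw [hv, ← hbS_inr ⟨j, hj⟩, Module.Basis.coord_apply, Module.Basis.repr_self]
            have hne : j ≠ (p₀-1)/2 := by omega
            simp [Finsupp.single_apply, hne]
  · have hind := F.indep_generic hsp
    have hspan' : ⊤ ≤ Submodule.span ℂ (Set.range (Sum.elim F.x F.y)) := by
      rw [← F.spans]
      apply Submodule.span_le.mpr
      rintro z (⟨j, rfl⟩ | ⟨j, rfl⟩)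
      · exact Submodule.subset_span ⟨Sum.inl j, rfl⟩
      · exact Submodule.subset_span ⟨Sum.inr j, rfl⟩
    set bS := Module.Basis.mk hind hspan' with hbS
    have hbS_inl : ∀ j : ℤ, bS (Sum.inl j) = F.x j := by
      intro j; rw [hbS, Module.Basis.mk_apply]; rfl
    have hbS_inr : ∀ j : ℤ, bS (Sum.inr j) = F.y j := by
      intro j; rw [hbS, Module.Basis.mk_apply]; rfl
    by_cases h2 : 2 ∣ p₀
    · refine ⟨bS.coord (Sum.inl (p₀/2)), ?_, ?_⟩
      · rw [vv_eq_even a b S F h2, ← hbS_inl]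
        simp [Module.Basis.coord_apply, Module.Basis.repr_self]
      · intro q hq
        rcases vv_cases a b S F q with ⟨j, hqj, hv⟩ | ⟨j, hqj, hv⟩
        · rw [hv, ← hbS_inl, Module.Basis.coord_apply, Module.Basis.repr_self]
          have hne : j ≠ p₀/2 := by omega
          simp [Finsupp.single_apply, hne]
        · rw [hv, ← hbS_inr, Module.Basis.coord_apply, Module.Basis.repr_self]
          simp [Finsupp.single_apply]
    · refine ⟨bS.coord (Sum.inr ((p₀-1)/2)), ?_, ?_⟩
      · rw [vv_eq_odd a b S F h2, ← hbS_inr]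
        simp [Module.Basis.coord_apply, Module.Basis.repr_self]
      · intro q hq
        rcases vv_cases a b S F q with ⟨j, hqj, hv⟩ | ⟨j, hqj, hv⟩
        · rw [hv, ← hbS_inl, Module.Basis.coord_apply, Module.Basis.repr_self]
          simp [Finsupp.single_apply]
        · rw [hv, ← hbS_inr, Module.Basis.coord_apply, Module.Basis.repr_self]
          have hne : j ≠ (p₀-1)/2 := by omega
          simp [Finsupp.single_apply, hne]

end SSide

end VTR8
namespace VTR8

section TSide

variable (a b : ℂ) {cc : ℂ} (hc : ℂ) (M : NSMod cc) (u : M.carrier)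
  (S : NSMod 0) (F : SA'Family a b S) (T : NSMod cc) (tw : TensorWitness M S T)

def zz (p : ℤ) : T.carrier := tw.t u (vv a b S F p)

/-- Filtration of the tensor module by monomial depth. -/
def FF (m : ℤ) : Submodule ℂ T.carrier :=
  Submodule.span ℂ {x | ∃ (P : VermaIndex) (q : ℤ),
    degP P ≤ m ∧ x = tw.t (monoM M u P) (vv a b S F q)}

lemma FF_mono {m m' : ℤ} (hmm : m ≤ m') : FF a b M u S F T tw m ≤ FF a b M u S F T tw m' := by
  apply Submodule.span_le.mpr
  rintro x ⟨P, q, hP, rfl⟩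
  exact Submodule.subset_span ⟨P, q, le_trans hP hmm, rfl⟩

lemma SS2FF {n m : ℤ} (hnm : n ≤ m) {w : M.carrier} (hw : w ∈ SS M u n) (q : ℤ) :
    tw.t w (vv a b S F q) ∈ FF a b M u S F T tw m := by
  suffices hgoal : (LinearMap.flip tw.t (vv a b S F q)) w ∈ FF a b M u S F T tw m from hgoal
  induction hw using Submodule.span_induction with
  | mem x hx =>
      obtain ⟨P, hP, rfl⟩ := hx
      exact Submodule.subset_span ⟨P, q, le_of_eq_of_le hP hnm, rfl⟩
  | zero => simp
  | add x y hx hy ihx ihy => rw [map_add]; exact Submodule.add_mem _ ihx ihy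
  | smul r x hx ih => rw [map_smul]; exact Submodule.smul_mem _ _ ih

/-- membership in `EE` pushed into the filtration. -/
lemma EE2FF (hu0 : M.L 0 u = hc • u)
    (hspan : Submodule.span ℂ (Set.range fun P : VermaIndex => vermaMonomial M u P.1) = ⊤)
    {n m : ℤ} (hnm : n ≤ m) {w : M.carrier} (hw : w ∈ EE hc M n) (q : ℤ) :
    tw.t w (vv a b S F q) ∈ FF a b M u S F T tw m :=
  SS2FF a b M u S F T tw hnm (EE_le_SS hc M u hu0 hspan hw) q

/-- Negative operators raise the filtration degree in a controlled way. -/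
lemma actFF (hu0 : M.L 0 u = hc • u) (huev : u ∈ M.even)
    (hspan : Submodule.span ℂ (Set.range fun P : VermaIndex => vermaMonomial M u P.1) = ⊤)
    (o : Op) (ho : 1 ≤ opIdx o) {m : ℤ} {x : T.carrier} (hx : x ∈ FF a b M u S F T tw m) :
    act T o x ∈ FF a b M u S F T tw (m + degOp o) := by
  induction hx using Submodule.span_induction with
  | mem x hx =>
      obtain ⟨P, q, hP, rfl⟩ := hx
      have hmemE : monoM M u P ∈ EE hc M (degP P) := mono_mem_EE hc M u hu0 P
      match o with
      | .inl k =>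
          show T.L (-k) _ ∈ _
          rw [tw.actL]
          apply Submodule.add_mem
          · have h1 : M.L (-k) (monoM M u P) ∈ EE hc M (degP P + 2*k) := by
              have := L_shift_EE hc M (-k) hmemE
              rwa [show degP P - 2 * -k = degP P + 2*k by ring] at this
            exact EE2FF a b hc M u S F T tw hu0 hspan
              (by simp only [degOp]; omega) h1 q
          · obtain ⟨s, hs⟩ := S_L_vv a b S F (-k) q
            rw [hs, map_smul]
            apply Submodule.smul_mem
            have hko : 1 ≤ k := by simpa [opIdx] using ho
            have hgen : tw.t (monoM M u P) (vv a b S F (q + 2*(-k))) ∈ FF a b M u S F T tw m :=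
              Submodule.subset_span ⟨P, q + 2*(-k), hP, rfl⟩
            exact FF_mono a b M u S F T tw (by simp only [degOp]; omega) hgen
      | .inr j =>
          show T.G (-j) _ ∈ _
          have hpar := wordOpM_parity M u huev (wordOf P.1)
          rw [fold_eq] at hpar
          have key : T.G (-j) (tw.t (monoM M u P) (vv a b S F q))
              = tw.t (M.G (-j) (monoM M u P)) (vv a b S F q)
                + tw.t (monoM M u P) (S.G (-j) (vv a b S F q))
              ∨ T.G (-j) (tw.t (monoM M u P) (vv a b S F q))
              = tw.t (M.G (-j) (monoM M u P)) (vv a b S F q)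
                - tw.t (monoM M u P) (S.G (-j) (vv a b S F q)) := by
            by_cases hev : Even (degP P)
            · exact Or.inl (tw.actG_even (-j) _ (hpar.1 hev) _)
            · exact Or.inr (tw.actG_odd (-j) _ (hpar.2 hev) _)
          have h1 : tw.t (M.G (-j) (monoM M u P)) (vv a b S F q)
              ∈ FF a b M u S F T tw (m + degOp (Sum.inr j : Op)) := by
            have hG : M.G (-j) (monoM M u P) ∈ EE hc M (degP P + (2*j - 1)) := by
              have := G_shift_EE hc M (-j) hmemE
              rwa [show degP P - 2 * -j - 1 = degP P + (2*j-1) by ring] at this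
            exact EE2FF a b hc M u S F T tw hu0 hspan
              (by simp only [degOp]; omega) hG q
          have h2 : tw.t (monoM M u P) (S.G (-j) (vv a b S F q))
              ∈ FF a b M u S F T tw (m + degOp (Sum.inr j : Op)) := by
            obtain ⟨s, hs⟩ := S_G_vv a b S F (-j) q
            rw [hs, map_smul]
            apply Submodule.smul_mem
            have hjo : 1 ≤ j := by simpa [opIdx] using ho
            have hgen : tw.t (monoM M u P) (vv a b S F (q + 2*(-j) + 1)) ∈ FF a b M u S F T tw m :=
              Submodule.subset_span ⟨P, q + 2*(-j) + 1, hP, rfl⟩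
            exact FF_mono a b M u S F T tw (by simp only [degOp]; omega) hgen
          rcases key with hkey | hkey
          · rw [hkey]; exact Submodule.add_mem _ h1 h2
          · rw [hkey]; exact Submodule.sub_mem _ h1 h2
  | zero => simp
  | add x y hx hy ihx ihy => rw [map_add]; exact Submodule.add_mem _ ihx ihy
  | smul r x hx ih => rw [map_smul]; exact Submodule.smul_mem _ _ ih

/-- Leading-term expansion of a word applied to `u ⊗ v_p`. -/
lemma expand (hu0 : M.L 0 u = hc • u) (huev : u ∈ M.even)
    (hspan : Submodule.span ℂ (Set.range fun P : VermaIndex => vermaMonomial M u P.1) = ⊤)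
    (N : List Op) (hN : NegWord N) (p : ℤ) :
    wordOp T N (zz a b M u S F T tw p)
      - tw.t (wordOpM M N u) (vv a b S F p) ∈ FF a b M u S F T tw (degW N - 1) := by
  induction N with
  | nil =>
      simp only [wordOp_nil, LinearMap.id_coe, id_eq, zz, wordOpM, List.map_nil,
        List.prod_nil, Module.End.one_apply]
      rw [sub_self]
      exact Submodule.zero_mem _
  | cons o N ih =>
      have hNneg : NegWord N := fun o' ho' => hN o' (List.mem_cons_of_mem o ho')
      have ho : 1 ≤ opIdx o := hN o (List.mem_cons_self)
      have herr := ih hNneg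
      set e := wordOp T N (zz a b M u S F T tw p) - tw.t (wordOpM M N u) (vv a b S F p) with he
      have hsplit : wordOp T (o :: N) (zz a b M u S F T tw p)
          = act T o (tw.t (wordOpM M N u) (vv a b S F p)) + act T o e := by
        rw [wordOp_cons_apply, he, map_sub]
        abel
      have hacte : act T o e ∈ FF a b M u S F T tw (degW (o :: N) - 1) := by
        have := actFF a b hc M u S F T tw hu0 huev hspan o ho herr
        rwa [show degW N - 1 + degOp o = degW (o :: N) - 1 by rw [degW_cons]; ring] at this
      have hWE : wordOpM M N u ∈ EE hc M (degW N) := wordOpM_mem_EE hc M u hu0 N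
      have hlow : ∀ q : ℤ, tw.t (wordOpM M N u) (vv a b S F q)
          ∈ FF a b M u S F T tw (degW (o :: N) - 1) := by
        intro q
        apply EE2FF a b hc M u S F T tw hu0 hspan _ hWE q
        rw [degW_cons]
        have h3 : 1 ≤ degOp o := by
          match o with
          | .inl k => simp only [degOp]; simp only [opIdx, Sum.elim_inl, id] at ho; omega
          | .inr j => simp only [degOp]; simp only [opIdx, Sum.elim_inr, id] at ho; omega
        omega
      rw [hsplit, wordOpM_cons_apply]
      match o with
      | .inl k =>
          have hact : act T (Sum.inl k) (tw.t (wordOpM M N u) (vv a b S F p))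
              = tw.t (mact M (Sum.inl k) (wordOpM M N u)) (vv a b S F p)
                + tw.t (wordOpM M N u) (S.L (-k) (vv a b S F p)) := by
            show T.L (-k) _ = _
            rw [tw.actL]
            rfl
          rw [hact]
          have : tw.t (mact M (Sum.inl k) (wordOpM M N u)) (vv a b S F p)
              + tw.t (wordOpM M N u) (S.L (-k) (vv a b S F p)) + act T (Sum.inl k) e
              - tw.t (mact M (Sum.inl k) (wordOpM M N u)) (vv a b S F p)
              = tw.t (wordOpM M N u) (S.L (-k) (vv a b S F p)) + act T (Sum.inl k) e := by
            abel
          rw [this]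
          apply Submodule.add_mem _ _ hacte
          obtain ⟨s, hs⟩ := S_L_vv a b S F (-k) p
          rw [hs, map_smul]
          exact Submodule.smul_mem _ _ (hlow _)
      | .inr j =>
          have hpar := wordOpM_parity M u huev N
          have hact : act T (Sum.inr j) (tw.t (wordOpM M N u) (vv a b S F p))
              = tw.t (mact M (Sum.inr j) (wordOpM M N u)) (vv a b S F p)
                + tw.t (wordOpM M N u) (S.G (-j) (vv a b S F p))
              ∨ act T (Sum.inr j) (tw.t (wordOpM M N u) (vv a b S F p))
              = tw.t (mact M (Sum.inr j) (wordOpM M N u)) (vv a b S F p)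
                - tw.t (wordOpM M N u) (S.G (-j) (vv a b S F p)) := by
            by_cases hev : Even (degW N)
            · exact Or.inl (tw.actG_even (-j) _ (hpar.1 hev) _)
            · exact Or.inr (tw.actG_odd (-j) _ (hpar.2 hev) _)
          obtain ⟨s, hs⟩ := S_G_vv a b S F (-j) p
          rcases hact with hact | hact
          · rw [hact]
            have : tw.t (mact M (Sum.inr j) (wordOpM M N u)) (vv a b S F p)
                + tw.t (wordOpM M N u) (S.G (-j) (vv a b S F p)) + act T (Sum.inr j) e
                - tw.t (mact M (Sum.inr j) (wordOpM M N u)) (vv a b S F p)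
                = tw.t (wordOpM M N u) (S.G (-j) (vv a b S F p)) + act T (Sum.inr j) e := by
              abel
            rw [this]
            apply Submodule.add_mem _ _ hacte
            rw [hs, map_smul]
            exact Submodule.smul_mem _ _ (hlow _)
          · rw [hact]
            have : tw.t (mact M (Sum.inr j) (wordOpM M N u)) (vv a b S F p)
                - tw.t (wordOpM M N u) (S.G (-j) (vv a b S F p)) + act T (Sum.inr j) e
                - tw.t (mact M (Sum.inr j) (wordOpM M N u)) (vv a b S F p)
                = - tw.t (wordOpM M N u) (S.G (-j) (vv a b S F p)) + act T (Sum.inr j) e := by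
              abel
            rw [this]
            apply Submodule.add_mem _ _ hacte
            apply Submodule.neg_mem
            rw [hs, map_smul]
            exact Submodule.smul_mem _ _ (hlow _)

end TSide

end VTR8
namespace VTR8

lemma olt_asymm {o₁ o₂ : Op} (h : oltB o₁ o₂ = true) : oltB o₂ o₁ = false := by
  match o₁, o₂ with
  | .inl k₁, .inl k₂ =>
      simp only [oltB, decide_eq_true_eq] at h
      simp only [oltB, decide_eq_false_iff_not]
      omega
  | .inl k₁, .inr j₂ => simp [oltB] at h
  | .inr j₁, .inl k₂ => simp [oltB]
  | .inr j₁, .inr j₂ =>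
      simp only [oltB, decide_eq_true_eq] at h
      simp only [oltB, decide_eq_false_iff_not]
      omega

lemma invW_cons (o : Op) (N : List Op) :
    invW (o :: N) = N.countP (oltB o) + invW N := rfl

lemma invW_le_sq (N : List Op) : invW N ≤ N.length ^ 2 := by
  induction N with
  | nil => simp [invW]
  | cons o N ih =>
      rw [invW_cons]
      have h1 : N.countP (oltB o) ≤ N.length := List.countP_le_length
      have h2 : (o :: N).length = N.length + 1 := rfl
      rw [h2]
      nlinarith [ih]

lemma inv_swap (o₁ o₂ : Op) (h : oltB o₁ o₂ = true) (A B : List Op) :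
    invW (A ++ o₂ :: o₁ :: B) + 1 = invW (A ++ o₁ :: o₂ :: B) := by
  induction A with
  | nil =>
      simp only [List.nil_append, invW_cons, List.countP_cons, h, olt_asymm h]
      simp only [if_true, Bool.false_eq_true, if_false]
      omega
  | cons aa A ih =>
      simp only [List.cons_append, invW_cons]
      have hcnt : (A ++ o₂ :: o₁ :: B).countP (oltB aa) = (A ++ o₁ :: o₂ :: B).countP (oltB aa) := by
        simp only [List.countP_append, List.countP_cons]
        omega
      rw [hcnt]
      omega

lemma exists_bad {N : List Op} (hN : ¬ normalW N) :
    ∃ (A : List Op) (o₁ o₂ : Op) (B : List Op),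
      N = A ++ o₁ :: o₂ :: B ∧ ¬ good o₁ o₂ := by
  classical
  induction N with
  | nil => exact absurd List.isChain_nil hN
  | cons o N ih =>
      match N with
      | [] => exact absurd (List.isChain_singleton o) hN
      | o' :: N' =>
          by_cases hg : good o o'
          · have hN' : ¬ normalW (o' :: N') := by
              intro hcon
              exact hN (List.isChain_cons_cons.mpr ⟨hg, hcon⟩)
            obtain ⟨A, o₁, o₂, B, hEq, hbad⟩ := ih hN'
            exact ⟨o :: A, o₁, o₂, B, by rw [hEq]; rfl, hbad⟩
          · exact ⟨[], o, o', N', rfl, hg⟩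

section Straighten

variable (a b : ℂ) {cc : ℂ} (M : NSMod cc) (u : M.carrier)
  (S : NSMod 0) (F : SA'Family a b S) (T : NSMod cc) (tw : TensorWitness M S T)

/-- Span of the images of normal-form words. -/
def NSp (p : ℤ) : Submodule ℂ T.carrier :=
  Submodule.span ℂ {x | ∃ P : VermaIndex, x = wordOp T (wordOf P.1) (zz a b M u S F T tw p)}

lemma negword_perm {A B : List Op} {o₁ o₂ : Op} (h : NegWord (A ++ o₁ :: o₂ :: B)) :
    NegWord (A ++ o₂ :: o₁ :: B) := by
  intro o ho
  apply h
  simp only [List.mem_append, List.mem_cons] at ho ⊢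
  tauto

lemma negword_mid {A B : List Op} {o₁ o₂ : Op} (h : NegWord (A ++ o₁ :: o₂ :: B))
    {o' : Op} (ho' : 1 ≤ opIdx o') : NegWord (A ++ o' :: B) := by
  intro o ho
  simp only [List.mem_append, List.mem_cons] at ho
  rcases ho with hA | rfl | hB
  · exact h o (by simp [hA])
  · exact ho'
  · exact h o (by simp [hB])

lemma straighten_main : ∀ (μ : ℕ) (N : List Op), NegWord N →
    invW N + N.length ^ 3 ≤ μ → ∀ p : ℤ,
    wordOp T N (zz a b M u S F T tw p) ∈ NSp a b M u S F T tw p := by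
  intro μ
  induction μ using Nat.strong_induction_on with
  | _ μ IH =>
    intro N hneg hμ p
    by_cases hnorm : normalW N
    · obtain ⟨P, hP⟩ := normal_decomp hnorm hneg
      exact Submodule.subset_span ⟨P, by rw [hP]⟩
    · obtain ⟨A, o₁, o₂, B, rfl, hbad⟩ := exists_bad hnorm
      have hneg₁ : 1 ≤ opIdx o₁ := hneg o₁ (by simp)
      have hneg₂ : 1 ≤ opIdx o₂ := hneg o₂ (by simp)
      set y : T.carrier := wordOp T B (zz a b M u S F T tw p) with hy
      have hsplit : wordOp T (A ++ o₁ :: o₂ :: B) (zz a b M u S F T tw p)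
          = wordOp T A (act T o₁ (act T o₂ y)) := by
        rw [wordOp_append_apply, wordOp_cons_apply, wordOp_cons_apply]
      have hswap_mem : oltB o₁ o₂ = true →
          wordOp T (A ++ o₂ :: o₁ :: B) (zz a b M u S F T tw p) ∈ NSp a b M u S F T tw p := by
        intro holt
        have hinv := inv_swap o₁ o₂ holt A B
        apply IH (invW (A ++ o₂ :: o₁ :: B) + (A ++ o₂ :: o₁ :: B).length ^ 3) ?_ _
          (negword_perm hneg) le_rfl
        have hlen' : (A ++ o₂ :: o₁ :: B).length = (A ++ o₁ :: o₂ :: B).length := by simp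
        rw [hlen']
        set L3 := (A ++ o₁ :: o₂ :: B).length ^ 3
        omega
      have hmid_mem : ∀ o' : Op, 1 ≤ opIdx o' →
          wordOp T (A ++ o' :: B) (zz a b M u S F T tw p) ∈ NSp a b M u S F T tw p := by
        intro o' ho'
        apply IH (invW (A ++ o' :: B) + (A ++ o' :: B).length ^ 3) ?_ _
          (negword_mid hneg ho') le_rfl
        have hlen'' : (A ++ o' :: B).length = A.length + B.length + 1 := by simp; omega
        have hlen : (A ++ o₁ :: o₂ :: B).length = A.length + B.length + 2 := by simp; omega
        have hbound := invW_le_sq (A ++ o' :: B)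
        rw [hlen''] at hbound ⊢
        rw [hlen] at hμ
        have key : (A.length + B.length + 1) ^ 2 + (A.length + B.length + 1) ^ 3
            < (A.length + B.length + 2) ^ 3 := by nlinarith [sq_nonneg (A.length + B.length)]
        have h0 : 0 ≤ invW (A ++ o₁ :: o₂ :: B) := Nat.zero_le _
        linarith
      have hmid_split : ∀ o' : Op, wordOp T (A ++ o' :: B) (zz a b M u S F T tw p)
          = wordOp T A (act T o' y) := by
        intro o'
        rw [wordOp_append_apply, wordOp_cons_apply]
      have hswap_split : wordOp T (A ++ o₂ :: o₁ :: B) (zz a b M u S F T tw p)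
          = wordOp T A (act T o₂ (act T o₁ y)) := by
        rw [wordOp_append_apply, wordOp_cons_apply, wordOp_cons_apply]
      rw [hsplit]
      match o₁, o₂ with
      | .inl k₁, .inl k₂ =>
          have hk₁ : 1 ≤ k₁ := by simpa [opIdx] using hneg₁
          have hk₂ : 1 ≤ k₂ := by simpa [opIdx] using hneg₂
          have hkk : k₁ < k₂ := by
            by_contra hcon
            exact hbad (by simp only [good]; omega)
          have hrel := T.rel_LL (-k₁) (-k₂) y
          have hcond : ¬ (-k₁ + -k₂ = 0) := by omega
          rw [if_neg hcond, zero_smul, add_zero, sub_eq_iff_eq_add] at hrel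
          have hidx : (-k₁ + -k₂ : ℤ) = -(k₁ + k₂) := by ring
          have hact : act T (Sum.inl k₁) (act T (Sum.inl k₂) y)
              = (((-k₂ : ℤ) : ℂ) - ((-k₁ : ℤ) : ℂ)) • act T (Sum.inl (k₁ + k₂)) y
                + act T (Sum.inl k₂) (act T (Sum.inl k₁) y) := by
            show T.L (-k₁) (T.L (-k₂) y)
                = _ • T.L (-(k₁ + k₂)) y + T.L (-k₂) (T.L (-k₁) y)
            rw [← hidx]
            exact hrel
          rw [hact, map_add, map_smul]
          apply Submodule.add_mem
          · apply Submodule.smul_mem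
            rw [← hmid_split (Sum.inl (k₁ + k₂))]
            apply hmid_mem
            show 1 ≤ k₁ + k₂
            omega
          · rw [← hswap_split]
            apply hswap_mem
            simp only [oltB, decide_eq_true_eq]
            omega
      | .inl k₁, .inr j₂ => exact absurd trivial hbad
      | .inr j₁, .inl k₂ =>
          have hj₁ : 1 ≤ j₁ := by simpa [opIdx] using hneg₁
          have hk₂ : 1 ≤ k₂ := by simpa [opIdx] using hneg₂
          have hrel := T.rel_LG (-k₂) (-j₁) y
          rw [sub_eq_iff_eq_add] at hrel
          have hidx : (-k₂ + -j₁ : ℤ) = -(k₂ + j₁) := by ring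
          have hact : act T (Sum.inr j₁) (act T (Sum.inl k₂) y)
              = act T (Sum.inl k₂) (act T (Sum.inr j₁) y)
                - ((((-j₁ : ℤ) : ℂ) + 1/2) - ((-k₂ : ℤ) : ℂ)/2) • act T (Sum.inr (k₂ + j₁)) y := by
            show T.G (-j₁) (T.L (-k₂) y)
                = T.L (-k₂) (T.G (-j₁) y) - _ • T.G (-(k₂ + j₁)) y
            rw [← hidx]
            have h5 : (((-j₁ : ℤ) : ℂ) + 1/2 - ((-k₂ : ℤ) : ℂ)/2) • T.G (-k₂ + -j₁) y
                + T.G (-j₁) (T.L (-k₂) y) = T.L (-k₂) (T.G (-j₁) y) := hrel.symm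
            rw [add_comm] at h5
            exact eq_sub_of_add_eq h5
          rw [hact, map_sub, map_smul]
          apply Submodule.sub_mem
          · rw [← hswap_split]
            apply hswap_mem
            simp [oltB]
          · apply Submodule.smul_mem
            rw [← hmid_split (Sum.inr (k₂ + j₁))]
            apply hmid_mem
            show 1 ≤ k₂ + j₁
            omega
      | .inr j₁, .inr j₂ =>
          have hj₁ : 1 ≤ j₁ := by simpa [opIdx] using hneg₁
          have hj₂ : 1 ≤ j₂ := by simpa [opIdx] using hneg₂
          have hjj : j₁ ≤ j₂ := by
            by_contra hcon
            exact hbad (by simp only [good]; omega)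
          have hrel := T.rel_GG (-j₁) (-j₂) y
          have hcond : ¬ (-j₁ + -j₂ + 1 = 0) := by omega
          rw [if_neg hcond, zero_smul, sub_zero] at hrel
          rcases eq_or_lt_of_le hjj with rfl | hlt
          · have h3 : act T (Sum.inr j₁) (act T (Sum.inr j₁) y)
                = act T (Sum.inl (2*j₁ - 1)) y := by
              apply smul_right_injective T.carrier (two_ne_zero (α := ℂ))
              show (2:ℂ) • T.G (-j₁) (T.G (-j₁) y) = (2:ℂ) • T.L (-(2*j₁-1)) y
              rw [two_smul]
              rw [hrel]
              have hidx : (-j₁ + -j₁ + 1 : ℤ) = -(2*j₁ - 1) := by ring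
              rw [hidx]
            rw [h3, ← hmid_split (Sum.inl (2*j₁ - 1))]
            apply hmid_mem
            show 1 ≤ 2*j₁ - 1
            omega
          · have hidx : (-j₁ + -j₂ + 1 : ℤ) = -(j₁ + j₂ - 1) := by ring
            have hact : act T (Sum.inr j₁) (act T (Sum.inr j₂) y)
                = (2:ℂ) • act T (Sum.inl (j₁ + j₂ - 1)) y
                  - act T (Sum.inr j₂) (act T (Sum.inr j₁) y) := by
              show T.G (-j₁) (T.G (-j₂) y)
                  = (2:ℂ) • T.L (-(j₁ + j₂ - 1)) y - T.G (-j₂) (T.G (-j₁) y)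
              rw [← hidx]
              exact eq_sub_of_add_eq hrel
            rw [hact, map_sub, map_smul]
            apply Submodule.sub_mem
            · apply Submodule.smul_mem
              rw [← hmid_split (Sum.inl (j₁ + j₂ - 1))]
              apply hmid_mem
              show 1 ≤ j₁ + j₂ - 1
              omega
            · rw [← hswap_split]
              apply hswap_mem
              simp only [oltB, decide_eq_true_eq]
              omega

end Straighten

end VTR8
namespace VTR8

/-- The trivial Verma index. -/
def Pempty : VermaIndex :=
  ⟨([], []), List.isChain_nil, by simp, List.isChain_nil, by simp⟩

section Final

variable (a b : ℂ) {cc : ℂ} (hc : ℂ) (M : NSMod cc) (u : M.carrier)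
  (S : NSMod 0) (F : SA'Family a b S) (T : NSMod cc) (tw : TensorWitness M S T)

lemma monoM_Pempty : monoM M u Pempty = u := rfl

/-- The candidate submodule: the span of all words in negative operators applied
to the vectors `u ⊗ v_p`, `p ≥ 1`. -/
def Wbig : Submodule ℂ T.carrier :=
  Submodule.span ℂ {x | ∃ (N : List Op) (p : ℤ),
    NegWord N ∧ 1 ≤ p ∧ x = wordOp T N (zz a b M u S F T tw p)}

lemma zz_mem_Wbig (p : ℤ) (hp : 1 ≤ p) : zz a b M u S F T tw p ∈ Wbig a b M u S F T tw :=
  Submodule.subset_span ⟨[], p, by intro o ho; simp at ho, hp, rfl⟩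

lemma negact_Wbig (o : Op) (ho : 1 ≤ opIdx o) {x : T.carrier}
    (hx : x ∈ Wbig a b M u S F T tw) : act T o x ∈ Wbig a b M u S F T tw := by
  induction hx using Submodule.span_induction with
  | mem x hxx =>
      obtain ⟨N, p, hN, hp, rfl⟩ := hxx
      rw [← wordOp_cons_apply]
      refine Submodule.subset_span ⟨o :: N, p, ?_, hp, rfl⟩
      intro o' ho'
      rcases List.mem_cons.mp ho' with rfl | ho'
      · exact ho
      · exact hN o' ho'
  | zero => rw [map_zero]; exact Submodule.zero_mem _
  | add x y hx hy ihx ihy => rw [map_add]; exact Submodule.add_mem _ ihx ihy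
  | smul r x hx ih => rw [map_smul]; exact Submodule.smul_mem _ _ ih

lemma base_clos (hu0 : M.L 0 u = hc • u) (huev : u ∈ M.even)
    (hwL : ∀ n : ℤ, 1 ≤ n → M.L n u = 0) (hwG : ∀ k : ℤ, 0 ≤ k → M.G k u = 0)
    (m p : ℤ) (hp : 1 ≤ p) :
    T.L m (zz a b M u S F T tw p) ∈ Wbig a b M u S F T tw
      ∧ T.G m (zz a b M u S F T tw p) ∈ Wbig a b M u S F T tw := by
  constructor
  · rcases lt_trichotomy m 0 with hm | rfl | hm
    · have : T.L m (zz a b M u S F T tw p)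
          = wordOp T [Sum.inl (-m)] (zz a b M u S F T tw p) := by
        rw [wordOp_cons_apply]
        show T.L m _ = T.L (-(-m)) _
        rw [neg_neg]
        rfl
      rw [this]
      refine Submodule.subset_span ⟨[Sum.inl (-m)], p, ?_, hp, rfl⟩
      intro o ho
      have : o = Sum.inl (-m) := by simpa using ho
      subst this
      show (1:ℤ) ≤ -m
      omega
    · show T.L 0 (tw.t u (vv a b S F p)) ∈ _
      rw [tw.actL, hu0, map_smul]
      obtain ⟨s, hs⟩ := S_L_vv a b S F 0 p
      rw [hs, map_smul]
      have hzz : vv a b S F (p + 2*0) = vv a b S F p := by norm_num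
      rw [hzz]
      exact Submodule.add_mem _
        (Submodule.smul_mem _ _ (zz_mem_Wbig a b M u S F T tw p hp))
        (Submodule.smul_mem _ _ (zz_mem_Wbig a b M u S F T tw p hp))
    · show T.L m (tw.t u (vv a b S F p)) ∈ _
      rw [tw.actL, hwL m hm, map_zero, LinearMap.zero_apply, zero_add]
      obtain ⟨s, hs⟩ := S_L_vv a b S F m p
      rw [hs, map_smul]
      exact Submodule.smul_mem _ _ (zz_mem_Wbig a b M u S F T tw (p + 2*m) (by omega))
  · rcases le_or_gt 0 m with hm | hm
    · show T.G m (tw.t u (vv a b S F p)) ∈ _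
      rw [tw.actG_even m u huev, hwG m hm, map_zero, LinearMap.zero_apply, zero_add]
      obtain ⟨s, hs⟩ := S_G_vv a b S F m p
      rw [hs, map_smul]
      exact Submodule.smul_mem _ _ (zz_mem_Wbig a b M u S F T tw (p + 2*m + 1) (by omega))
    · have : T.G m (zz a b M u S F T tw p)
          = wordOp T [Sum.inr (-m)] (zz a b M u S F T tw p) := by
        rw [wordOp_cons_apply]
        show T.G m _ = T.G (-(-m)) _
        rw [neg_neg]
        rfl
      rw [this]
      refine Submodule.subset_span ⟨[Sum.inr (-m)], p, ?_, hp, rfl⟩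
      intro o ho
      have : o = Sum.inr (-m) := by simpa using ho
      subst this
      show (1:ℤ) ≤ -m
      omega

lemma clos_word (hu0 : M.L 0 u = hc • u) (huev : u ∈ M.even)
    (hwL : ∀ n : ℤ, 1 ≤ n → M.L n u = 0) (hwG : ∀ k : ℤ, 0 ≤ k → M.G k u = 0)
    (N : List Op) (hN : NegWord N) (p : ℤ) (hp : 1 ≤ p) (m : ℤ) :
    T.L m (wordOp T N (zz a b M u S F T tw p)) ∈ Wbig a b M u S F T tw
      ∧ T.G m (wordOp T N (zz a b M u S F T tw p)) ∈ Wbig a b M u S F T tw := by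
  induction N generalizing m with
  | nil =>
      simpa [wordOp_nil] using base_clos a b hc M u S F T tw hu0 huev hwL hwG m p hp
  | cons o N ih =>
      have hN' : NegWord N := fun o' ho' => hN o' (List.mem_cons_of_mem o ho')
      have ho : 1 ≤ opIdx o := hN o (List.mem_cons_self)
      set y : T.carrier := wordOp T N (zz a b M u S F T tw p) with hy
      have hy_mem : y ∈ Wbig a b M u S F T tw := Submodule.subset_span ⟨N, p, hN', hp, rfl⟩
      have ihL : ∀ m' : ℤ, T.L m' y ∈ Wbig a b M u S F T tw := fun m' => (ih hN' m').1
      have ihG : ∀ m' : ℤ, T.G m' y ∈ Wbig a b M u S F T tw := fun m' => (ih hN' m').2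
      rw [wordOp_cons_apply]
      match o with
      | .inl κ =>
          constructor
          · have hrel := T.rel_LL m (-κ) y
            rw [sub_eq_iff_eq_add] at hrel
            show T.L m (T.L (-κ) y) ∈ _
            rw [hrel]
            refine Submodule.add_mem _ (Submodule.add_mem _ ?_ ?_) ?_
            · exact Submodule.smul_mem _ _ (ihL _)
            · exact Submodule.smul_mem _ _ hy_mem
            · exact negact_Wbig a b M u S F T tw (Sum.inl κ) ho (ihL m)
          · have hrel := T.rel_LG (-κ) m y
            have hGL : T.G m (T.L (-κ) y)
                = T.L (-κ) (T.G m y) - (((m:ℂ) + 1/2) - ((-κ : ℤ):ℂ)/2) • T.G (-κ + m) y := by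
              rw [eq_sub_iff_add_eq, add_comm]
              exact (sub_eq_iff_eq_add.mp hrel).symm
            show T.G m (T.L (-κ) y) ∈ _
            rw [hGL]
            exact Submodule.sub_mem _
              (negact_Wbig a b M u S F T tw (Sum.inl κ) ho (ihG m))
              (Submodule.smul_mem _ _ (ihG _))
      | .inr j =>
          constructor
          · have hrel := T.rel_LG m (-j) y
            rw [sub_eq_iff_eq_add] at hrel
            show T.L m (T.G (-j) y) ∈ _
            rw [hrel]
            exact Submodule.add_mem _ (Submodule.smul_mem _ _ (ihG _))
              (negact_Wbig a b M u S F T tw (Sum.inr j) ho (ihL m))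
          · have hrel := T.rel_GG m (-j) y
            have hGG : T.G m (T.G (-j) y)
                = (2:ℂ) • T.L (m + -j + 1) y
                  - (if m + -j + 1 = 0 then (1/3) * (((m:ℂ) + 1/2)^2 - 1/4) * cc else 0) • y
                  - T.G (-j) (T.G m y) :=
              eq_sub_of_add_eq hrel
            show T.G m (T.G (-j) y) ∈ _
            rw [hGG]
            exact Submodule.sub_mem _
              (Submodule.sub_mem _ (Submodule.smul_mem _ _ (ihL _))
                (Submodule.smul_mem _ _ hy_mem))
              (negact_Wbig a b M u S F T tw (Sum.inr j) ho (ihG m))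

open Classical in
/-- The coordinate functional on the tensor module. -/
lemma xi_spec
    (hind : LinearIndependent ℂ (fun P : VermaIndex => vermaMonomial M u P.1))
    (hspan : Submodule.span ℂ (Set.range fun P : VermaIndex => vermaMonomial M u P.1) = ⊤)
    (P₀ : VermaIndex) (p₀ : ℤ) (hp₀ : 0 ≤ p₀) :
    ∃ Xi : T.carrier →ₗ[ℂ] ℂ, ∀ (P : VermaIndex) (q : ℤ),
      Xi (tw.t (monoM M u P) (vv a b S F q))
        = (if P = P₀ then 1 else 0) * (if q = p₀ then 1 else 0) := by
  classical
  obtain ⟨gS, hg1, hg0⟩ := exists_coordS a b S F p₀ hp₀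
  set bM := Module.Basis.mk hind (le_of_eq hspan.symm) with hbM
  set fM := bM.coord P₀ with hfM
  have hfM_eval : ∀ P : VermaIndex, fM (monoM M u P) = if P = P₀ then 1 else 0 := by
    intro P
    have : monoM M u P = bM P := by rw [hbM, Module.Basis.mk_apply]; rfl
    rw [this, hfM, Module.Basis.coord_apply, Module.Basis.repr_self, Finsupp.single_apply]
  set bil : M.carrier →ₗ[ℂ] S.carrier →ₗ[ℂ] ℂ :=
    LinearMap.mk₂ ℂ (fun w s => fM w * gS s)
      (by intros; simp [map_add]; ring)
      (by intros; simp [map_smul, smul_eq_mul]; ring)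
      (by intros; simp [map_add]; ring)
      (by intros; simp [map_smul, smul_eq_mul]; ring) with hbil
  refine ⟨tw.isTensor.lift bil, ?_⟩
  intro P q
  rw [tw.isTensor.lift_eq]
  show fM (monoM M u P) * gS (vv a b S F q) = _
  rw [hfM_eval]
  by_cases hq : q = p₀
  · rw [if_pos hq, hq, hg1]
  · rw [hg0 q hq, if_neg hq]

end Final

end VTR8
namespace VTR8

section Final2

variable (a b : ℂ) {cc : ℂ} (hc : ℂ) (M : NSMod cc) (u : M.carrier)
  (S : NSMod 0) (F : SA'Family a b S) (T : NSMod cc) (tw : TensorWitness M S T)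

def genGamma : (VermaIndex × {p : ℤ // 1 ≤ p}) → T.carrier :=
  fun γ => wordOp T (wordOf γ.1.1) (zz a b M u S F T tw γ.2.1)

lemma z0_not_mem (hu0 : M.L 0 u = hc • u) (huev : u ∈ M.even)
    (hind : LinearIndependent ℂ (fun P : VermaIndex => vermaMonomial M u P.1))
    (hspan : Submodule.span ℂ (Set.range fun P : VermaIndex => vermaMonomial M u P.1) = ⊤) :
    zz a b M u S F T tw 0 ∉
      Submodule.span ℂ (Set.range (genGamma a b M u S F T tw)) := by
  classical
  intro hmem
  obtain ⟨cf, hcf⟩ := Finsupp.mem_span_range_iff_exists_finsupp.mp hmem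
  rcases Finset.eq_empty_or_nonempty cf.support with hemp | hne
  · have hcf0 : cf = 0 := Finsupp.support_eq_empty.mp hemp
    rw [hcf0, Finsupp.sum_zero_index] at hcf
    obtain ⟨Xi, hXi⟩ := xi_spec a b M u S F T tw hind hspan Pempty 0 le_rfl
    have h1 : Xi (zz a b M u S F T tw 0) = 1 := by
      have h2 := hXi Pempty 0
      rw [if_pos rfl, if_pos rfl, mul_one] at h2
      exact h2
    rw [← hcf, map_zero] at h1
    exact one_ne_zero h1.symm
  · obtain ⟨γ₀, hγ₀mem, hγ₀max⟩ := Finset.exists_max_image cf.support (fun γ => degP γ.1) hne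
    obtain ⟨Xi, hXi⟩ := xi_spec a b M u S F T tw hind hspan γ₀.1 γ₀.2.1
      (le_trans zero_le_one γ₀.2.2)
    have hXiFF : ∀ x ∈ FF a b M u S F T tw (degP γ₀.1 - 1), Xi x = 0 := by
      intro x hx
      induction hx using Submodule.span_induction with
      | mem x hxx =>
          obtain ⟨P, q, hP, rfl⟩ := hxx
          rw [hXi P q]
          have hne' : P ≠ γ₀.1 := by
            intro he
            rw [he] at hP
            omega
          rw [if_neg hne', zero_mul]
      | zero => simp
      | add x y hx hy ihx ihy => rw [map_add, ihx, ihy, add_zero]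
      | smul r x hx ih => rw [map_smul, ih, smul_zero]
    have hgen_eval : ∀ γ ∈ cf.support,
        Xi (genGamma a b M u S F T tw γ) = if γ = γ₀ then 1 else 0 := by
      intro γ hγ
      have hexp := expand a b hc M u S F T tw hu0 huev hspan
        (wordOf γ.1.1) (negWord_wordOf γ.1) γ.2.1
      rw [fold_eq] at hexp
      have hdd : degW (wordOf γ.1.1) = degP γ.1 := rfl
      have hsub : genGamma a b M u S F T tw γ
          - tw.t (monoM M u γ.1) (vv a b S F γ.2.1)
          ∈ FF a b M u S F T tw (degP γ₀.1 - 1) := by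
        apply FF_mono a b M u S F T tw _ hexp
        have hmax := hγ₀max γ hγ
        rw [hdd]
        omega
      have h0 := hXiFF _ hsub
      rw [map_sub, sub_eq_zero] at h0
      rw [h0, hXi]
      by_cases heq : γ = γ₀
      · rw [heq]
        simp
      · rw [if_neg heq]
        by_cases hP : γ.1 = γ₀.1
        · have hp2 : γ.2.1 ≠ γ₀.2.1 := by
            intro hpp
            exact heq (Prod.ext hP (Subtype.ext hpp))
          rw [if_pos hP, if_neg hp2, one_mul]
        · rw [if_neg hP, zero_mul]
    have heval := congrArg Xi hcf
    rw [map_finsuppSum] at heval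
    have hz0 : Xi (zz a b M u S F T tw 0) = 0 := by
      have h2 := hXi Pempty 0
      have hne0 : (0:ℤ) ≠ γ₀.2.1 := by
        have := γ₀.2.2
        omega
      rw [if_neg hne0, mul_zero] at h2
      exact h2
    rw [hz0] at heval
    have hsum : (cf.sum fun γ s => Xi (s • genGamma a b M u S F T tw γ)) = cf γ₀ := by
      rw [Finsupp.sum, Finset.sum_eq_single γ₀]
      · rw [map_smul, smul_eq_mul, hgen_eval γ₀ hγ₀mem, if_pos rfl, mul_one]
      · intro γ hγ hne2
        rw [map_smul, smul_eq_mul, hgen_eval γ hγ, if_neg hne2, mul_zero]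
      · intro habs
        exact (habs hγ₀mem).elim
    rw [hsum] at heval
    exact Finsupp.mem_support_iff.mp hγ₀mem heval

end Final2

end VTR8
/-- Theorem 2.3: the tensor product of the Verma module
`M(c,h)` with an intermediate series module `SA'_{a,b}` is reducible: it has
a submodule different from `0` and the whole module. -/
theorem verma_tensor_reducible (a b c h : ℂ)
    (ha0 : 0 ≤ a.re) (ha1 : a.re < 1) (hb : b ≠ 1)
    (M : NSMod c) (u : M.carrier) (hM : IsVerma h M u)
    (S : NSMod 0) (F : SA'Family a b S)
    (T : NSMod c) (tw : TensorWitness M S T) :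
    ∃ W : Submodule ℂ T.carrier, T.IsSubmodule W ∧ W ≠ ⊥ ∧ W ≠ ⊤ := by
  classical
  obtain ⟨hw, hind, hspan⟩ := hM
  have hu0 := hw.hw0
  have huev := hw.mem_even
  refine ⟨VTR8.Wbig a b M u S F T tw, ⟨?_, ?_⟩, ?_, ?_⟩
  · intro m v hv
    induction hv using Submodule.span_induction with
    | mem x hxx =>
        obtain ⟨N, p, hN, hp, rfl⟩ := hxx
        exact (VTR8.clos_word a b h M u S F T tw hu0 huev hw.hwL hw.hwG N hN p hp m).1
    | zero => rw [map_zero]; exact Submodule.zero_mem _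
    | add x y hx hy ihx ihy => rw [map_add]; exact Submodule.add_mem _ ihx ihy
    | smul r x hx ih => rw [map_smul]; exact Submodule.smul_mem _ _ ih
  · intro m v hv
    induction hv using Submodule.span_induction with
    | mem x hxx =>
        obtain ⟨N, p, hN, hp, rfl⟩ := hxx
        exact (VTR8.clos_word a b h M u S F T tw hu0 huev hw.hwL hw.hwG N hN p hp m).2
    | zero => rw [map_zero]; exact Submodule.zero_mem _
    | add x y hx hy ihx ihy => rw [map_add]; exact Submodule.add_mem _ ihx ihy
    | smul r x hx ih => rw [map_smul]; exact Submodule.smul_mem _ _ ih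
  · intro hbot
    obtain ⟨Xi, hXi⟩ := VTR8.xi_spec a b M u S F T tw hind hspan VTR8.Pempty 1 zero_le_one
    have hz1 : Xi (VTR8.zz a b M u S F T tw 1) = 1 := by
      have h2 := hXi VTR8.Pempty 1
      rw [if_pos rfl, if_pos rfl, mul_one] at h2
      exact h2
    have hmem := VTR8.zz_mem_Wbig a b M u S F T tw 1 le_rfl
    rw [hbot, Submodule.mem_bot] at hmem
    rw [hmem, map_zero] at hz1
    exact one_ne_zero hz1.symm
  · intro htop
    have hmem : VTR8.zz a b M u S F T tw 0 ∈ VTR8.Wbig a b M u S F T tw := by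
      rw [htop]; trivial
    have hle : VTR8.Wbig a b M u S F T tw
        ≤ Submodule.span ℂ (Set.range (VTR8.genGamma a b M u S F T tw)) := by
      apply Submodule.span_le.mpr
      rintro x ⟨N, p, hN, hp, rfl⟩
      have hstr := VTR8.straighten_main a b M u S F T tw (VTR8.invW N + N.length ^ 3)
        N hN le_rfl p
      have hNSp : VTR8.NSp a b M u S F T tw p
          ≤ Submodule.span ℂ (Set.range (VTR8.genGamma a b M u S F T tw)) := by
        apply Submodule.span_le.mpr
        rintro x' ⟨P, rfl⟩
        exact Submodule.subset_span ⟨(P, ⟨p, hp⟩), rfl⟩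
      exact hNSp hstr
    exact VTR8.z0_not_mem a b h M u S F T tw hu0 huev hind hspan (hle hmem)
end
end

section
/- Let a, b ∈ ℂ and let V be a highest weight module over the Neveu–Schwarz algebra with highest weight vector u of highest weight (c, h), decomposed as V = ⨁_{n ∈ ℕ} V_{h−n/2} as in the grading assumption. Then the operators L_k (k ∈ ℤ) and G_{k+1/2} (k ∈ ℤ) of the shifted module V ⊗ ℂ[t^{±1/2}] satisfy the Neveu–Schwarz relations with central charge c; that is, the shifted module is a Neveu–Schwarz module of central charge c. -/
noncomputable section

open Submodule

section ShiftedAux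

open scoped DirectSum

variable {a b c h : ℂ} {V : NSMod c} {u : V.carrier} {D : ℕ → Submodule ℂ V.carrier}

/-- Extended grading indexed by `ℤ` (`⊥` in negative degrees). -/
def Dz (D : ℕ → Submodule ℂ V.carrier) (q : ℤ) : Submodule ℂ V.carrier :=
  if 0 ≤ q then D q.toNat else ⊥

/-- The sign `(-1)^q`. -/
def eps (q : ℤ) : ℂ := if 2 ∣ q then 1 else -1

lemma eps_even_shift (q k : ℤ) : eps (q - 2*k) = eps q := by
  unfold eps
  simp only [show ((2:ℤ) ∣ q - 2*k) ↔ (2:ℤ) ∣ q by omega]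

lemma eps_odd_shift (q k : ℤ) : eps (q - 2*k - 1) = -eps q := by
  unfold eps
  simp only [show ((2:ℤ) ∣ q - 2*k - 1) ↔ ¬ ((2:ℤ) ∣ q) by omega]
  by_cases hq : (2:ℤ) ∣ q <;> simp [hq]

lemma mem_Dz_natCast {v : V.carrier} {n : ℕ} (hv : v ∈ D n) : v ∈ Dz D (n : ℤ) := by
  unfold Dz
  rw [if_pos (Int.ofNat_nonneg n)]
  simpa using hv

lemma eig_z (hV : GradedHW h V u D) {q : ℤ} {v : V.carrier} (hv : v ∈ Dz D q) :
    V.L 0 v = (h - (q : ℂ) / 2) • v := by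
  unfold Dz at hv
  by_cases hq : 0 ≤ q
  · rw [if_pos hq] at hv
    have := hV.eig q.toNat v hv
    rwa [show ((q.toNat : ℕ) : ℂ) = (q : ℂ) by
      rw [← Int.cast_natCast, Int.toNat_of_nonneg hq]] at this
  · rw [if_neg hq] at hv
    simp only [Submodule.mem_bot] at hv
    simp [hv]

/-- `DFinsupp.mapRange.linearMap`, typed on the direct sum. -/
def mr (D : ℕ → Submodule ℂ V.carrier) (g : ∀ n : ℕ, (D n) →ₗ[ℂ] (D n)) :
    (⨁ n : ℕ, ↥(D n)) →ₗ[ℂ] ⨁ n : ℕ, ↥(D n) :=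
  DFinsupp.mapRange.linearMap g

lemma mr_of (g : ∀ n : ℕ, (D n) →ₗ[ℂ] (D n)) (i : ℕ) (v : D i) :
    mr D g (DirectSum.of (fun n => (D n : Submodule ℂ V.carrier)) i v)
      = DirectSum.of (fun n => (D n : Submodule ℂ V.carrier)) i (g i v) :=
  DFinsupp.mapRange_single (hf := fun n => (g n).map_zero)

lemma mr_apply (g : ∀ n : ℕ, (D n) →ₗ[ℂ] (D n)) (x : ⨁ n : ℕ, ↥(D n))
    (n : ℕ) : mr D g x n = g n (x n) :=
  DFinsupp.mapRange_apply _ (fun n => (g n).map_zero) x n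

set_option synthInstance.maxHeartbeats 1000000 in
lemma eigen_mem (hV : GradedHW h V u D) (w : V.carrier) (q : ℤ)
    (hw : V.L 0 w = (h - (q : ℂ) / 2) • w) : w ∈ Dz D q := by
  obtain ⟨x, rfl⟩ := hV.internal.surjective w
  set Φ := DirectSum.coeLinearMap D with hΦ
  have hcoe : ∀ y : ⨁ n : ℕ, ↥(D n), (DirectSum.coeAddMonoidHom D) y = Φ y := fun _ => rfl
  rw [hcoe] at hw ⊢
  set f : ∀ n : ℕ, (D n) →ₗ[ℂ] (D n) := fun n => (h - (n : ℂ) / 2) • LinearMap.id with hf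
  set g : ∀ n : ℕ, (D n) →ₗ[ℂ] (D n) := fun n => (h - (q : ℂ) / 2) • LinearMap.id with hg
  have hcomm : (V.L 0) ∘ₗ Φ = Φ ∘ₗ mr D f := by
    apply DirectSum.linearMap_ext
    intro i
    apply LinearMap.ext
    intro v
    simp only [LinearMap.comp_apply, DirectSum.lof_eq_of]
    rw [mr_of f i v, hΦ, DirectSum.coeLinearMap_of, DirectSum.coeLinearMap_of]
    have := hV.eig i (v : V.carrier) v.2
    simpa [hf] using this
  have hcomm2 : Φ ∘ₗ mr D g = (h - (q : ℂ) / 2) • Φ := by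
    apply DirectSum.linearMap_ext
    intro i
    apply LinearMap.ext
    intro v
    simp only [LinearMap.comp_apply, LinearMap.smul_apply, DirectSum.lof_eq_of]
    rw [mr_of g i v, hΦ, DirectSum.coeLinearMap_of, DirectSum.coeLinearMap_of]
    simp [hg]
  have h1 : Φ (mr D f x) = Φ (mr D g x) := by
    have h2 := LinearMap.congr_fun hcomm x
    have h3 := LinearMap.congr_fun hcomm2 x
    simp only [LinearMap.comp_apply, LinearMap.smul_apply] at h2 h3
    rw [← h2, hw, ← h3]
  have h2 : mr D f x = mr D g x := hV.internal.injective h1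
  have h3 : ∀ n : ℕ, (n : ℤ) ≠ q → x n = 0 := by
    intro n hn
    have h4 : mr D f x n = mr D g x n := by rw [h2]
    rw [mr_apply, mr_apply] at h4
    simp only [hf, hg, LinearMap.smul_apply, LinearMap.id_apply] at h4
    have h5 : ((h - (n : ℂ)/2) - (h - (q : ℂ)/2)) • x n = 0 := by
      rw [sub_smul, h4, sub_self]
    have hne : (h - (n : ℂ)/2) - (h - (q : ℂ)/2) ≠ 0 := by
      have he : (h - (n : ℂ)/2) - (h - (q : ℂ)/2) = ((q : ℂ) - (n : ℂ))/2 := by ring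
      rw [he]
      intro hcon
      apply hn
      have h6 : (n : ℂ) = (q : ℂ) := by linear_combination -2 * hcon
      exact_mod_cast h6
    rcases smul_eq_zero.mp h5 with h6 | h6
    · exact absurd h6 hne
    · exact h6
  by_cases hq : 0 ≤ q
  · have hx : x = DirectSum.of (fun n => (D n : Submodule ℂ V.carrier)) q.toNat (x q.toNat) := by
      apply DFinsupp.ext
      intro n
      by_cases hn : n = q.toNat
      · subst hn
        rw [DirectSum.of_eq_same]
      · rw [DirectSum.of_eq_of_ne _ _ _ hn]
        exact h3 n (by omega)
    rw [hx, hΦ, DirectSum.coeLinearMap_of]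
    unfold Dz
    rw [if_pos hq]
    exact (x q.toNat).2
  · have hx : x = 0 := by
      apply DFinsupp.ext
      intro n
      simpa using h3 n (by omega)
    rw [hx]
    simp [Dz, if_neg hq]

lemma neg_one_pow_toNat {q : ℤ} (hq : 0 ≤ q) : ((-1 : ℂ)) ^ (q.toNat) = eps q := by
  unfold eps
  by_cases h2 : (2:ℤ) ∣ q
  · rw [if_pos h2]
    apply Even.neg_one_pow
    rcases h2 with ⟨r, hr⟩
    exact ⟨r.toNat, by omega⟩
  · rw [if_neg h2]
    apply Odd.neg_one_pow
    exact ⟨((q - 1)/2).toNat, by omega⟩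

lemma actLz {Sh : PreNSMod} (sw : ShiftedWitness a b V D Sh) (k p q : ℤ) (v : V.carrier)
    (hv : v ∈ Dz D q) :
    Sh.L k (sw.ι p v) = sw.ι (p + 2*k) (V.L k v)
      + (if (2:ℤ) ∣ p - q
          then a + (p:ℂ)/2 + (k:ℂ)*b + (q:ℂ)/2
          else a + (p:ℂ)/2 + (k:ℂ)*(b - 1/2) + (q:ℂ)/2) • sw.ι (p + 2*k) v := by
  unfold Dz at hv
  split_ifs at hv with hq
  · have e1 : ((q.toNat : ℤ)) = q := Int.toNat_of_nonneg hq
    have e2 : ((q.toNat : ℕ) : ℂ) = (q:ℂ) := by rw [← Int.cast_natCast, e1]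
    have h0 := sw.actL k p q.toNat v hv
    rw [e1, e2] at h0
    exact h0
  · have hv0 : v = 0 := by simpa using hv
    rw [hv0]
    simp

lemma actGz {Sh : PreNSMod} (sw : ShiftedWitness a b V D Sh) (k p q : ℤ) (v : V.carrier)
    (hv : v ∈ Dz D q) :
    Sh.G k (sw.ι p v) = sw.ι (p + 2*k + 1) (V.G k v)
      + (eps q * (if (2:ℤ) ∣ p - q then 1
          else a + (p:ℂ)/2 + (2*(k:ℂ)+1)*(b-1/2) + (q:ℂ)/2)) • sw.ι (p + 2*k + 1) v := by
  unfold Dz at hv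
  split_ifs at hv with hq
  · have e1 : ((q.toNat : ℤ)) = q := Int.toNat_of_nonneg hq
    have e2 : ((q.toNat : ℕ) : ℂ) = (q:ℂ) := by rw [← Int.cast_natCast, e1]
    have h0 := sw.actG k p q.toNat v hv
    rw [e1, e2, neg_one_pow_toNat hq] at h0
    exact h0
  · have hv0 : v = 0 := by simpa using hv
    rw [hv0]
    simp

lemma memLz (hV : GradedHW h V u D) {q : ℤ} {v : V.carrier} (hv : v ∈ Dz D q) (k : ℤ) :
    V.L k v ∈ Dz D (q - 2*k) := by
  apply eigen_mem hV
  have he := eig_z hV hv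
  have h0 := V.rel_LL 0 k v
  rw [he, map_smul] at h0
  simp only [Int.cast_zero, zero_add] at h0
  have hz : (if k = 0 then (((0:ℂ)) ^ 3 - ((0:ℂ))) / 12 * c else 0) = (0 : ℂ) := by
    split_ifs <;> norm_num
  rw [hz, zero_smul, add_zero, sub_eq_iff_eq_add] at h0
  rw [h0]
  push_cast
  module

lemma memGz (hV : GradedHW h V u D) {q : ℤ} {v : V.carrier} (hv : v ∈ Dz D q) (k : ℤ) :
    V.G k v ∈ Dz D (q - 2*k - 1) := by
  apply eigen_mem hV
  have he := eig_z hV hv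
  have h0 := V.rel_LG 0 k v
  rw [he, map_smul] at h0
  simp only [Int.cast_zero, zero_add] at h0
  rw [sub_eq_iff_eq_add] at h0
  rw [h0]
  push_cast
  module

lemma ext_gen {Sh : PreNSMod} (hV : GradedHW h V u D) (sw : ShiftedWitness a b V D Sh)
    (T T' : Sh.carrier →ₗ[ℂ] Sh.carrier)
    (H : ∀ (p : ℤ) (n : ℕ), ∀ v ∈ D n, T (sw.ι p v) = T' (sw.ι p v)) : T = T' := by
  have hspan : Submodule.span ℂ
      (⋃ (p : ℤ), ⋃ (n : ℕ), (sw.ι p '' (D n : Set V.carrier))) = ⊤ := by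
    rw [eq_top_iff]
    rintro w -
    obtain ⟨f, rfl⟩ := sw.directSum.surjective w
    rw [Finsupp.lsum_apply, Finsupp.sum]
    apply Submodule.sum_mem
    intro p _
    have h1 : f p ∈ Submodule.span ℂ (⋃ n : ℕ, (D n : Set V.carrier)) := by
      rw [← Submodule.iSup_eq_span, hV.internal.submodule_iSup_eq_top]
      trivial
    have h2 : sw.ι p (f p) ∈ Submodule.map (sw.ι p)
        (Submodule.span ℂ (⋃ n : ℕ, (D n : Set V.carrier))) :=
      Submodule.mem_map_of_mem h1
    rw [Submodule.map_span] at h2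
    refine Submodule.span_mono ?_ h2
    rintro y ⟨z, hz, rfl⟩
    rcases Set.mem_iUnion.mp hz with ⟨n, hn⟩
    exact Set.mem_iUnion.mpr ⟨p, Set.mem_iUnion.mpr ⟨n, ⟨z, hn, rfl⟩⟩⟩
  apply LinearMap.ext_on hspan
  rintro y hy
  rcases Set.mem_iUnion.mp hy with ⟨p, hy⟩
  rcases Set.mem_iUnion.mp hy with ⟨n, hy⟩
  rcases hy with ⟨z, hz, rfl⟩
  exact H p n z hz

lemma genLL {Sh : PreNSMod} (hV : GradedHW h V u D) (sw : ShiftedWitness a b V D Sh)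
    (m n p q : ℤ) (v : V.carrier) (hv : v ∈ Dz D q) :
    Sh.L m (Sh.L n (sw.ι p v)) - Sh.L n (Sh.L m (sw.ι p v))
      = ((n : ℂ) - (m : ℂ)) • Sh.L (m + n) (sw.ι p v)
        + (if m + n = 0 then (((m : ℂ) ^ 3 - (m : ℂ)) / 12) * c else 0) • sw.ι p v := by
  have e1 := actLz sw n p q v hv
  have e2 := actLz sw m (p+2*n) (q-2*n) _ (memLz hV hv n)
  have e3 := actLz sw m (p+2*n) q v hv
  have e4 := actLz sw m p q v hv
  have e5 := actLz sw n (p+2*m) (q-2*m) _ (memLz hV hv m)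
  have e6 := actLz sw n (p+2*m) q v hv
  have e7 := actLz sw (m+n) p q v hv
  simp only [show ((2:ℤ) ∣ p + 2*n - (q - 2*n)) ↔ ((2:ℤ) ∣ p - q) from by omega,
    show ((2:ℤ) ∣ p + 2*n - q) ↔ ((2:ℤ) ∣ p - q) from by omega,
    show ((2:ℤ) ∣ p + 2*m - (q - 2*m)) ↔ ((2:ℤ) ∣ p - q) from by omega,
    show ((2:ℤ) ∣ p + 2*m - q) ↔ ((2:ℤ) ∣ p - q) from by omega] at e2 e3 e5 e6
  simp only [e1, e2, e3, e4, e5, e6, e7, map_add, map_smul]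
  simp only [show p + 2*n + 2*m = p + 2*(m+n) from by ring,
    show p + 2*m + 2*n = p + 2*(m+n) from by ring]
  have hrel : V.L m (V.L n v) = V.L n (V.L m v) + (((n : ℂ) - (m : ℂ)) • V.L (m + n) v
      + (if m + n = 0 then (((m : ℂ) ^ 3 - (m : ℂ)) / 12) * c else 0) • v) := by
    rw [← V.rel_LL m n v]; abel
  rw [hrel]
  simp only [map_add, map_smul]
  by_cases hmn : m + n = 0
  · simp only [if_pos hmn, show p + 2*(m+n) = p from by rw [hmn]; ring]
    by_cases hpar : (2:ℤ) ∣ p - q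
    · simp only [if_pos hpar]; push_cast; module
    · simp only [if_neg hpar]; push_cast; module
  · simp only [if_neg hmn, zero_smul, add_zero]
    by_cases hpar : (2:ℤ) ∣ p - q
    · simp only [if_pos hpar]; push_cast; module
    · simp only [if_neg hpar]; push_cast; module

lemma genLG {Sh : PreNSMod} (hV : GradedHW h V u D) (sw : ShiftedWitness a b V D Sh)
    (m k p q : ℤ) (v : V.carrier) (hv : v ∈ Dz D q) :
    Sh.L m (Sh.G k (sw.ι p v)) - Sh.G k (Sh.L m (sw.ι p v))
      = (((k : ℂ) + 1 / 2) - (m : ℂ) / 2) • Sh.G (m + k) (sw.ι p v) := by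
  have e1 := actGz sw k p q v hv
  have e2 := actLz sw m (p+2*k+1) (q-2*k-1) _ (memGz hV hv k)
  have e3 := actLz sw m (p+2*k+1) q v hv
  have e4 := actLz sw m p q v hv
  have e5 := actGz sw k (p+2*m) (q-2*m) _ (memLz hV hv m)
  have e6 := actGz sw k (p+2*m) q v hv
  have e7 := actGz sw (m+k) p q v hv
  rw [eps_even_shift] at e5
  simp only [show ((2:ℤ) ∣ p + 2*k + 1 - (q - 2*k - 1)) ↔ ((2:ℤ) ∣ p - q) from by omega,
    show ((2:ℤ) ∣ p + 2*k + 1 - q) ↔ ¬((2:ℤ) ∣ p - q) from by omega,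
    show ((2:ℤ) ∣ p + 2*m - (q - 2*m)) ↔ ((2:ℤ) ∣ p - q) from by omega,
    show ((2:ℤ) ∣ p + 2*m - q) ↔ ((2:ℤ) ∣ p - q) from by omega] at e2 e3 e5 e6
  simp only [e1, e2, e3, e4, e5, e6, e7, map_add, map_smul]
  simp only [show p + 2*k + 1 + 2*m = p + 2*(m+k) + 1 from by ring,
    show p + 2*m + 2*k + 1 = p + 2*(m+k) + 1 from by ring]
  have hrel : V.L m (V.G k v) = V.G k (V.L m v)
      + (((k : ℂ) + 1 / 2) - (m : ℂ) / 2) • V.G (m + k) v := by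
    rw [← V.rel_LG m k v]; abel
  rw [hrel]
  simp only [map_add, map_smul]
  by_cases hpar : (2:ℤ) ∣ p - q <;> by_cases hq2 : (2:ℤ) ∣ q <;>
    simp only [eps, hpar, hq2, if_true, if_false, ite_true, ite_false, not_true, not_false_iff] <;>
    push_cast <;> module

lemma genGG {Sh : PreNSMod} (hV : GradedHW h V u D) (sw : ShiftedWitness a b V D Sh)
    (k l p q : ℤ) (v : V.carrier) (hv : v ∈ Dz D q) :
    Sh.G k (Sh.G l (sw.ι p v)) + Sh.G l (Sh.G k (sw.ι p v))
      = (2 : ℂ) • Sh.L (k + l + 1) (sw.ι p v)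
        - (if k + l + 1 = 0
            then (1 / 3) * (((k : ℂ) + 1 / 2) ^ 2 - 1 / 4) * c
            else 0) • sw.ι p v := by
  have e1 := actGz sw l p q v hv
  have e2 := actGz sw k (p+2*l+1) (q-2*l-1) _ (memGz hV hv l)
  have e3 := actGz sw k (p+2*l+1) q v hv
  have e4 := actGz sw k p q v hv
  have e5 := actGz sw l (p+2*k+1) (q-2*k-1) _ (memGz hV hv k)
  have e6 := actGz sw l (p+2*k+1) q v hv
  rw [eps_odd_shift] at e2 e5
  have e7 := actLz sw (k+l+1) p q v hv
  simp only [show ((2:ℤ) ∣ p + 2*l + 1 - (q - 2*l - 1)) ↔ ((2:ℤ) ∣ p - q) from by omega,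
    show ((2:ℤ) ∣ p + 2*l + 1 - q) ↔ ¬((2:ℤ) ∣ p - q) from by omega,
    show ((2:ℤ) ∣ p + 2*k + 1 - (q - 2*k - 1)) ↔ ((2:ℤ) ∣ p - q) from by omega,
    show ((2:ℤ) ∣ p + 2*k + 1 - q) ↔ ¬((2:ℤ) ∣ p - q) from by omega] at e2 e3 e5 e6
  simp only [e1, e2, e3, e4, e5, e6, e7, map_add, map_smul]
  simp only [show p + 2*l + 1 + 2*k + 1 = p + 2*(k+l+1) from by ring,
    show p + 2*k + 1 + 2*l + 1 = p + 2*(k+l+1) from by ring]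
  have hrel : V.G k (V.G l v) = -(V.G l (V.G k v)) + ((2 : ℂ) • V.L (k + l + 1) v
      - (if k + l + 1 = 0 then (1 / 3) * (((k : ℂ) + 1 / 2) ^ 2 - 1 / 4) * c else 0) • v) := by
    rw [← V.rel_GG k l v]; abel
  rw [hrel]
  simp only [map_add, map_sub, map_smul, map_neg]
  by_cases hkl : k + l + 1 = 0
  · simp only [if_pos hkl, show p + 2*(k+l+1) = p from by rw [hkl]; ring]
    by_cases hpar : (2:ℤ) ∣ p - q <;> by_cases hq2 : (2:ℤ) ∣ q <;>
      simp only [eps, hpar, hq2, if_true, if_false, ite_true, ite_false, not_true,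
        not_false_iff] <;>
      push_cast <;> module
  · simp only [if_neg hkl, zero_smul, sub_zero, add_zero]
    by_cases hpar : (2:ℤ) ∣ p - q <;> by_cases hq2 : (2:ℤ) ∣ q <;>
      simp only [eps, hpar, hq2, if_true, if_false, ite_true, ite_false, not_true,
        not_false_iff] <;>
      push_cast <;> module

end ShiftedAux

/-- Lemma 3.1: the operators of the shifted module
`V ⊗ ℂ[t^{±1/2}]` attached to a graded highest weight module `V` of highest
weight `(c,h)` satisfy the Neveu–Schwarz relations with central charge `c`:
the shifted module is a Neveu–Schwarz module of central charge `c`. -/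
theorem shifted_module_is_NSMod (a b c h : ℂ)
    (V : NSMod c) (u : V.carrier) (D : ℕ → Submodule ℂ V.carrier)
    (hV : GradedHW h V u D)
    (Sh : PreNSMod) (sw : ShiftedWitness a b V D Sh) :
    (∀ (m n : ℤ) (v : Sh.carrier),
      Sh.L m (Sh.L n v) - Sh.L n (Sh.L m v)
        = ((n : ℂ) - (m : ℂ)) • Sh.L (m + n) v
          + (if m + n = 0 then (((m : ℂ) ^ 3 - (m : ℂ)) / 12) * c else 0) • v) ∧
    (∀ (m k : ℤ) (v : Sh.carrier),
      Sh.L m (Sh.G k v) - Sh.G k (Sh.L m v)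
        = (((k : ℂ) + 1 / 2) - (m : ℂ) / 2) • Sh.G (m + k) v) ∧
    (∀ (k l : ℤ) (v : Sh.carrier),
      Sh.G k (Sh.G l v) + Sh.G l (Sh.G k v)
        = (2 : ℂ) • Sh.L (k + l + 1) v
          - (if k + l + 1 = 0
              then (1 / 3) * (((k : ℂ) + 1 / 2) ^ 2 - 1 / 4) * c
              else 0) • v) := by
  refine ⟨?_, ?_, ?_⟩
  · intro m n
    have hT : ((Sh.L m) ∘ₗ (Sh.L n) - (Sh.L n) ∘ₗ (Sh.L m)) =
        (((n : ℂ) - (m : ℂ)) • Sh.L (m + n)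
          + (if m + n = 0 then (((m : ℂ) ^ 3 - (m : ℂ)) / 12) * c else 0) •
            (LinearMap.id : Sh.carrier →ₗ[ℂ] Sh.carrier)) := by
      apply ext_gen hV sw
      intro p n₀ w hw
      have hw' : w ∈ Dz D (n₀ : ℤ) := mem_Dz_natCast hw
      simpa only [LinearMap.sub_apply, LinearMap.comp_apply, LinearMap.add_apply,
        LinearMap.smul_apply, LinearMap.id_apply] using genLL hV sw m n p (n₀ : ℤ) w hw'
    intro v
    have := LinearMap.congr_fun hT v
    simpa only [LinearMap.sub_apply, LinearMap.comp_apply, LinearMap.add_apply,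
      LinearMap.smul_apply, LinearMap.id_apply] using this
  · intro m k
    have hT : ((Sh.L m) ∘ₗ (Sh.G k) - (Sh.G k) ∘ₗ (Sh.L m)) =
        ((((k : ℂ) + 1 / 2) - (m : ℂ) / 2) • Sh.G (m + k)) := by
      apply ext_gen hV sw
      intro p n₀ w hw
      have hw' : w ∈ Dz D (n₀ : ℤ) := mem_Dz_natCast hw
      simpa only [LinearMap.sub_apply, LinearMap.comp_apply,
        LinearMap.smul_apply] using genLG hV sw m k p (n₀ : ℤ) w hw'
    intro v
    have := LinearMap.congr_fun hT v
    simpa only [LinearMap.sub_apply, LinearMap.comp_apply,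
      LinearMap.smul_apply] using this
  · intro k l
    have hT : ((Sh.G k) ∘ₗ (Sh.G l) + (Sh.G l) ∘ₗ (Sh.G k)) =
        ((2 : ℂ) • Sh.L (k + l + 1)
          - (if k + l + 1 = 0 then (1 / 3) * (((k : ℂ) + 1 / 2) ^ 2 - 1 / 4) * c else 0) •
            (LinearMap.id : Sh.carrier →ₗ[ℂ] Sh.carrier)) := by
      apply ext_gen hV sw
      intro p n₀ w hw
      have hw' : w ∈ Dz D (n₀ : ℤ) := mem_Dz_natCast hw
      simpa only [LinearMap.sub_apply, LinearMap.comp_apply, LinearMap.add_apply,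
        LinearMap.smul_apply, LinearMap.id_apply] using genGG hV sw k l p (n₀ : ℤ) w hw'
    intro v
    have := LinearMap.congr_fun hT v
    simpa only [LinearMap.sub_apply, LinearMap.comp_apply, LinearMap.add_apply,
      LinearMap.smul_apply, LinearMap.id_apply] using this
end
end

section
/- Let a, b ∈ ℂ and let V be a highest weight module over the Neveu–Schwarz algebra with highest weight vector u of highest weight (c, h), decomposed as V = ⨁_{n ∈ ℕ} V_{h−n/2} as in the grading assumption. Then the linear map f : V ⊗ SA_{a,b} → V ⊗ ℂ[t^{±1/2}] determined by f(v ⊗ x_m) = v ⊗ t^{m+d} and f(v ⊗ y_{m+1/2}) = v ⊗ t^{m+1/2+d}, for v ∈ V_{h+d} and m ∈ ℤ, is an isomorphism of Neveu–Schwarz modules, where V ⊗ SA_{a,b} carries the tensor product module structure and V ⊗ ℂ[t^{±1/2}] carries the shifted module structure. -/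
noncomputable section

open Submodule

/-- Lemma 3.2: the map `f` with `f(v ⊗ x_m) = v ⊗ t^{m+d}`
and `f(v ⊗ y_{m+1/2}) = v ⊗ t^{m+1/2+d}` for `v ∈ V_{h+d}` (with `d = -n/2`,
so the exponents `m + d` and `m + 1/2 + d` are recorded by the integers
`2m - n` and `2m + 1 - n`) is an isomorphism of Neveu–Schwarz modules from
the tensor product `V ⊗ SA_{a,b}` onto the shifted module `V ⊗ ℂ[t^{±1/2}]`. -/
theorem tensor_iso_shifted (a b c h : ℂ)
    (V : NSMod c) (u : V.carrier) (D : ℕ → Submodule ℂ V.carrier)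
    (hV : GradedHW h V u D)
    (S : NSMod 0) (F : SAFamily a b S)
    (T : NSMod c) (tw : TensorWitness V S T)
    (Sh : NSMod c) (sw : ShiftedWitness a b V D Sh.toPreNSMod) :
    ∃ f : T.carrier →ₗ[ℂ] Sh.carrier,
      (∀ (n : ℕ), ∀ v ∈ D n, ∀ m : ℤ,
        f (tw.t v (F.x m)) = sw.ι (2 * m - (n : ℤ)) v ∧
        f (tw.t v (F.y m)) = sw.ι (2 * m + 1 - (n : ℤ)) v) ∧
      Function.Bijective f ∧
      (∀ (k : ℤ) (w : T.carrier), f (T.L k w) = Sh.L k (f w)) ∧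
      (∀ (k : ℤ) (w : T.carrier), f (T.G k w) = Sh.G k (f w)) := by
    classical
  letI : DirectSum.Decomposition D := hV.internal.chooseDecomposition
  -- the projections onto the graded pieces
  set pr : ℕ → V.carrier →ₗ[ℂ] V.carrier := fun n =>
    (D n).subtype ∘ₗ (DirectSum.component ℂ ℕ (fun n => ↥(D n)) n) ∘ₗ
      (DirectSum.decomposeLinearEquiv D).toLinearMap with hpr
  have pr_apply : ∀ (n : ℕ) (w : V.carrier),
      pr n w = ↑(DirectSum.decompose D w n) := by
    intro n w
    simp [hpr, DirectSum.decomposeLinearEquiv_apply, ← DirectSum.apply_eq_component]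
  have pr_mem : ∀ (n : ℕ) (w : V.carrier), pr n w ∈ D n := by
    intro n w; rw [pr_apply]; exact (DirectSum.decompose D w n).2
  have pr_same : ∀ (n : ℕ) (w : V.carrier), w ∈ D n → pr n w = w := by
    intro n w hw; rw [pr_apply]; exact DirectSum.decompose_of_mem_same D hw
  have pr_ne : ∀ (m n : ℕ) (w : V.carrier), w ∈ D m → m ≠ n → pr n w = 0 := by
    intro m n w hw hmn; rw [pr_apply]; exact DirectSum.decompose_of_mem_ne D hw hmn
  have pr_sum : ∀ w : V.carrier,
      ∑ n ∈ (DirectSum.decompose D w).support, pr n w = w := by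
    intro w
    simp_rw [pr_apply]
    exact DirectSum.sum_support_decompose D w
  have pr_nsupp : ∀ (n : ℕ) (w : V.carrier),
      n ∉ (DirectSum.decompose D w).support → pr n w = 0 := by
    intro n w hn
    rw [pr_apply, DFinsupp.notMem_support_iff.mp hn, Submodule.coe_zero]
  have L0_pr : ∀ (w : V.carrier) (n : ℕ),
      pr n (V.L 0 w) = (h - (n : ℂ) / 2) • pr n w := by
    intro w n
    conv_lhs => rw [← pr_sum w, map_sum, map_sum]
    have hterm : ∀ m ∈ (DirectSum.decompose D w).support,
        pr n (V.L 0 (pr m w)) = if m = n then (h - (n : ℂ) / 2) • pr n w else 0 := by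
      intro m _
      rw [hV.eig m (pr m w) (pr_mem m w), map_smul]
      by_cases hmn : m = n
      · subst hmn; rw [pr_same m _ (pr_mem m w), if_pos rfl]
      · rw [pr_ne m n _ (pr_mem m w) hmn, smul_zero, if_neg hmn]
    rw [Finset.sum_congr rfl hterm, Finset.sum_ite_eq' _ n _]
    by_cases hn : n ∈ (DirectSum.decompose D w).support
    · rw [if_pos hn]
    · rw [if_neg hn, pr_nsupp n w hn, smul_zero]
  -- eigenvectors of `L 0` lie in the graded pieces
  have memD : ∀ (w : V.carrier) (q : ℤ), V.L 0 w = (h - (q : ℂ) / 2) • w →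
      w = 0 ∨ ∃ n : ℕ, (n : ℤ) = q ∧ w ∈ D n := by
    intro w q hq
    have hzero : ∀ n : ℕ, (n : ℤ) ≠ q → pr n w = 0 := by
      intro n hn
      have h1 := L0_pr w n
      rw [hq, map_smul] at h1
      have h2 : ((h - (q : ℂ) / 2) - (h - (n : ℂ) / 2)) • pr n w = 0 := by
        rw [sub_smul, h1, sub_self]
      have h3 : (h - (q : ℂ) / 2) - (h - (n : ℂ) / 2) ≠ 0 := by
        have hnq : (n : ℂ) ≠ (q : ℂ) := by exact_mod_cast hn
        have : (h - (q : ℂ) / 2) - (h - (n : ℂ) / 2) = ((n : ℂ) - q) / 2 := by ring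
        rw [this]
        exact div_ne_zero (sub_ne_zero.mpr hnq) two_ne_zero
      exact (smul_eq_zero.mp h2).resolve_left h3
    by_cases hq0 : 0 ≤ q
    · right
      refine ⟨q.toNat, by omega, ?_⟩
      have hw : w = pr q.toNat w := by
        conv_lhs => rw [← pr_sum w]
        rw [Finset.sum_eq_single q.toNat]
        · intro m _ hm; exact hzero m (by omega)
        · intro hm; exact pr_nsupp _ _ hm
      rw [hw]; exact pr_mem _ _
    · left
      conv_lhs => rw [← pr_sum w]
      exact Finset.sum_eq_zero fun m _ => hzero m (by omega)
  -- the basis of S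
  have hspan : ⊤ ≤ Submodule.span ℂ (Set.range (Sum.elim F.x F.y)) := by
    rw [Set.Sum.elim_range, F.spans]
  let bS : Module.Basis (ℤ ⊕ ℤ) ℂ S.carrier := Module.Basis.mk F.indep hspan
  have bS_inl : ∀ m : ℤ, bS (Sum.inl m) = F.x m := fun m => Module.Basis.mk_apply F.indep hspan _
  have bS_inr : ∀ m : ℤ, bS (Sum.inr m) = F.y m := fun m => Module.Basis.mk_apply F.indep hspan _
  -- graded maps V → Sh
  let Phi : (ℕ → ℤ) → V.carrier →ₗ[ℂ] Sh.carrier := fun g =>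
    (DirectSum.toModule ℂ ℕ Sh.carrier (fun n => (sw.ι (g n)).comp (D n).subtype)) ∘ₗ
      (DirectSum.decomposeLinearEquiv D).toLinearMap
  have Phi_apply : ∀ (g : ℕ → ℤ) (n : ℕ) (v : V.carrier), v ∈ D n →
      Phi g v = sw.ι (g n) v := by
    intro g n v hv
    show (DirectSum.toModule ℂ ℕ Sh.carrier (fun n => (sw.ι (g n)).comp (D n).subtype))
        ((DirectSum.decomposeLinearEquiv D) v) = _
    rw [DirectSum.decomposeLinearEquiv_apply, DirectSum.decompose_of_mem D hv,
      ← DirectSum.lof_eq_of ℂ, DirectSum.toModule_lof]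
    rfl
  -- the map f
  let phi : ℤ ⊕ ℤ → V.carrier →ₗ[ℂ] Sh.carrier :=
    Sum.elim (fun m => Phi fun n => 2 * m - n) (fun m => Phi fun n => 2 * m + 1 - n)
  let B : S.carrier →ₗ[ℂ] V.carrier →ₗ[ℂ] Sh.carrier := bS.constr ℂ phi
  let f : T.carrier →ₗ[ℂ] Sh.carrier := tw.isTensor.lift B.flip
  have f_ts : ∀ (v : V.carrier) (s : S.carrier), f (tw.t v s) = B s v := fun v s =>
    tw.isTensor.lift_eq B.flip v s
  have fx : ∀ (n : ℕ), ∀ v ∈ D n, ∀ m : ℤ,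
      f (tw.t v (F.x m)) = sw.ι (2 * m - (n : ℤ)) v := by
    intro n v hv m
    rw [f_ts, ← bS_inl m]
    show (bS.constr ℂ phi) (bS (Sum.inl m)) v = _
    rw [Module.Basis.constr_basis]
    exact Phi_apply _ n v hv
  have fy : ∀ (n : ℕ), ∀ v ∈ D n, ∀ m : ℤ,
      f (tw.t v (F.y m)) = sw.ι (2 * m + 1 - (n : ℤ)) v := by
    intro n v hv m
    rw [f_ts, ← bS_inr m]
    show (bS.constr ℂ phi) (bS (Sum.inr m)) v = _
    rw [Module.Basis.constr_basis]
    exact Phi_apply _ n v hv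
  -- eigen-shift of `L k` and `G k`, and the evaluation of f on shifted tensors
  have eigL : ∀ (k : ℤ) (n : ℕ), ∀ v ∈ D n,
      V.L 0 (V.L k v) = (h - (((n : ℤ) - 2 * k : ℤ) : ℂ) / 2) • V.L k v := by
    intro k n v hv
    have hr := V.rel_LL 0 k v
    rw [hV.eig n v hv] at hr
    have h0 : (if (0 : ℤ) + k = 0 then (((0 : ℤ) : ℂ) ^ 3 - ((0 : ℤ) : ℂ)) / 12 * c else 0)
        = 0 := by
      split <;> simp
    rw [h0, zero_smul, add_zero, zero_add] at hr
    rw [eq_add_of_sub_eq hr, map_smul]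
    push_cast
    module
  have eigG : ∀ (k : ℤ) (n : ℕ), ∀ v ∈ D n,
      V.L 0 (V.G k v) = (h - (((n : ℤ) - 2 * k - 1 : ℤ) : ℂ) / 2) • V.G k v := by
    intro k n v hv
    have hr := V.rel_LG 0 k v
    rw [hV.eig n v hv, zero_add] at hr
    rw [eq_add_of_sub_eq hr, map_smul]
    push_cast
    module
  have fxZ : ∀ (w : V.carrier) (q : ℤ), V.L 0 w = (h - (q : ℂ) / 2) • w → ∀ m : ℤ,
      f (tw.t w (F.x m)) = sw.ι (2 * m - q) w := by
    intro w q hq m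
    rcases memD w q hq with h0 | ⟨n, hn, hmem⟩
    · rw [h0, map_zero, LinearMap.zero_apply, map_zero, map_zero]
    · subst hn; exact fx n w hmem m
  have fyZ : ∀ (w : V.carrier) (q : ℤ), V.L 0 w = (h - (q : ℂ) / 2) • w → ∀ m : ℤ,
      f (tw.t w (F.y m)) = sw.ι (2 * m + 1 - q) w := by
    intro w q hq m
    rcases memD w q hq with h0 | ⟨n, hn, hmem⟩
    · rw [h0, map_zero, LinearMap.zero_apply, map_zero, map_zero]
    · subst hn; exact fy n w hmem m
  -- the inverse map g
  let gam : ℤ → V.carrier →ₗ[ℂ] T.carrier := fun p =>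
    (DirectSum.toModule ℂ ℕ T.carrier (fun n =>
      (if (2 : ℤ) ∣ (p + n) then tw.t.flip (F.x ((p + n) / 2))
        else tw.t.flip (F.y ((p + n - 1) / 2))).comp (D n).subtype)) ∘ₗ
      (DirectSum.decomposeLinearEquiv D).toLinearMap
  have gam_apply : ∀ (p : ℤ) (n : ℕ), ∀ v ∈ D n,
      gam p v = if (2 : ℤ) ∣ (p + n) then tw.t v (F.x ((p + n) / 2))
        else tw.t v (F.y ((p + n - 1) / 2)) := by
    intro p n v hv
    show (DirectSum.toModule ℂ ℕ T.carrier _) ((DirectSum.decomposeLinearEquiv D) v) = _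
    rw [DirectSum.decomposeLinearEquiv_apply, DirectSum.decompose_of_mem D hv,
      ← DirectSum.lof_eq_of ℂ, DirectSum.toModule_lof]
    split <;> rfl
  let shE : (ℤ →₀ V.carrier) ≃ₗ[ℂ] Sh.carrier :=
    LinearEquiv.ofBijective _ sw.directSum
  have shE_single : ∀ (p : ℤ) (v : V.carrier), shE (Finsupp.single p v) = sw.ι p v := by
    intro p v
    show (Finsupp.lsum ℂ sw.ι) (Finsupp.single p v) = _
    rw [Finsupp.lsum_single]
  let g : Sh.carrier →ₗ[ℂ] T.carrier := (Finsupp.lsum ℂ gam) ∘ₗ shE.symm.toLinearMap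
  have g_iota : ∀ (p : ℤ) (v : V.carrier), g (sw.ι p v) = gam p v := by
    intro p v
    have hsymm : shE.symm (sw.ι p v) = Finsupp.single p v := by
      rw [← shE_single p v, LinearEquiv.symm_apply_apply]
    show (Finsupp.lsum ℂ gam) (shE.symm (sw.ι p v)) = _
    rw [hsymm, Finsupp.lsum_single]
  have hvtop : ∀ v : V.carrier, v ∈ ⨆ n, D n := by
    intro v; rw [hV.internal.submodule_iSup_eq_top]; trivial
  have hstop : ∀ s : S.carrier, s ∈ Submodule.span ℂ (Set.range F.x ∪ Set.range F.y) := by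
    intro s; rw [F.spans]; trivial
  -- g ∘ f = id
  have key1 : ∀ (v : V.carrier) (s : S.carrier), g (f (tw.t v s)) = tw.t v s := by
    intro v
    refine Submodule.iSup_induction (motive := fun v => ∀ s : S.carrier,
      g (f (tw.t v s)) = tw.t v s) D (hvtop v) ?_ ?_ ?_
    · intro n v hv s
      refine Submodule.span_induction (p := fun s _ => g (f (tw.t v s)) = tw.t v s)
        ?_ ?_ ?_ ?_ (hstop s)
      · rintro s (⟨m, rfl⟩ | ⟨m, rfl⟩)
        · have hdvd : (2 : ℤ) ∣ (2 * m - (n : ℤ) + n) := ⟨m, by ring⟩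
          rw [fx n v hv m, g_iota, gam_apply _ n v hv, if_pos hdvd,
            show 2 * m - (n : ℤ) + n = 2 * m by ring,
            Int.mul_ediv_cancel_left m (by norm_num : (2 : ℤ) ≠ 0)]
        · have hnd : ¬ (2 : ℤ) ∣ (2 * m + 1 - (n : ℤ) + n) := by
            rintro ⟨cc, hcc⟩; omega
          rw [fy n v hv m, g_iota, gam_apply _ n v hv, if_neg hnd,
            show 2 * m + 1 - (n : ℤ) + n - 1 = 2 * m by ring,
            Int.mul_ediv_cancel_left m (by norm_num : (2 : ℤ) ≠ 0)]
      · simp only [map_zero]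
      · intro s1 s2 _ _ h1 h2
        simp only [map_add]
        rw [h1, h2]
      · intro z s1 _ h1
        simp only [map_smul]
        rw [h1]
    · intro s
      simp only [map_zero, LinearMap.zero_apply]
    · intro v1 v2 h1 h2 s
      simp only [map_add, LinearMap.add_apply]
      rw [h1 s, h2 s]
  have gf : ∀ w : T.carrier, g (f w) = w := by
    intro w
    refine tw.isTensor.inductionOn (motive := fun w => g (f w) = w) w ?_ key1 ?_
    · simp only [map_zero]
    · intro w1 w2 h1 h2
      simp only [map_add]
      rw [h1, h2]
  -- f ∘ g = id
  have key2 : ∀ (p : ℤ) (v : V.carrier), f (g (sw.ι p v)) = sw.ι p v := by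
    intro p v
    refine Submodule.iSup_induction (motive := fun v => f (g (sw.ι p v)) = sw.ι p v) D
      (hvtop v) ?_ ?_ ?_
    · intro n v hv
      rw [g_iota, gam_apply _ n v hv]
      rcases Int.even_or_odd (p + (n : ℤ)) with ⟨cc, hcc⟩ | ⟨cc, hcc⟩
      · have hdvd : (2 : ℤ) ∣ (p + (n : ℤ)) := ⟨cc, by omega⟩
        rw [if_pos hdvd, fx n v hv,
          show p + (n : ℤ) = 2 * cc by omega,
          Int.mul_ediv_cancel_left cc (by norm_num : (2 : ℤ) ≠ 0),
          show 2 * cc - (n : ℤ) = p by omega]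
      · have hnd : ¬ (2 : ℤ) ∣ (p + (n : ℤ)) := by rintro ⟨dd, hdd⟩; omega
        rw [if_neg hnd, fy n v hv,
          show p + (n : ℤ) - 1 = 2 * cc by omega,
          Int.mul_ediv_cancel_left cc (by norm_num : (2 : ℤ) ≠ 0),
          show 2 * cc + 1 - (n : ℤ) = p by omega]
    · simp only [map_zero]
    · intro v1 v2 h1 h2
      simp only [map_add]
      rw [h1, h2]
  have fg : ∀ w : Sh.carrier, f (g w) = w := by
    intro w
    obtain ⟨l, rfl⟩ := shE.surjective w
    induction l using Finsupp.induction_linear with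
    | zero => simp only [map_zero]
    | add l1 l2 h1 h2 => simp only [map_add]; rw [h1, h2]
    | single p v => rw [shE_single, key2]
  have hbij : Function.Bijective f :=
    Function.bijective_iff_has_inverse.mpr ⟨g, gf, fg⟩
  -- commutation with L
  have commL : ∀ (k : ℤ) (w : T.carrier), f (T.L k w) = Sh.L k (f w) := by
    intro k w
    refine tw.isTensor.inductionOn
      (motive := fun w => f (T.L k w) = Sh.L k (f w)) w ?_ ?_ ?_
    · simp only [map_zero]
    · intro v s
      have main : ∀ v' ∈ (⨆ n, D n), ∀ s : S.carrier,
          f (T.L k (tw.t v' s)) = Sh.L k (f (tw.t v' s)) := by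
        intro v' hv'
        refine Submodule.iSup_induction (motive := fun v' => ∀ s : S.carrier,
          f (T.L k (tw.t v' s)) = Sh.L k (f (tw.t v' s))) D hv' ?_ ?_ ?_
        · intro n v hv s
          refine Submodule.span_induction
            (p := fun s _ => f (T.L k (tw.t v s)) = Sh.L k (f (tw.t v s)))
            ?_ ?_ ?_ ?_ (hstop s)
          · rintro s (⟨m, rfl⟩ | ⟨m, rfl⟩)
            · have hdvd : (2 : ℤ) ∣ (2 * m - (n : ℤ) - n) := ⟨m - n, by ring⟩
              rw [tw.actL, map_add, fxZ (V.L k v) ((n : ℤ) - 2 * k) (eigL k n v hv) m,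
                F.act_Lx, map_smul, map_smul, fx n v hv, fx n v hv,
                sw.actL k (2 * m - (n : ℤ)) n v hv, if_pos hdvd]
              rw [show 2 * m - ((n : ℤ) - 2 * k) = 2 * m - (n : ℤ) + 2 * k by ring,
                show 2 * (k + m) - (n : ℤ) = 2 * m - (n : ℤ) + 2 * k by ring]
              congr 1
              push_cast
              ring
            · have hnd : ¬ (2 : ℤ) ∣ (2 * m + 1 - (n : ℤ) - n) := by
                rintro ⟨cc, hcc⟩; omega
              rw [tw.actL, map_add, fyZ (V.L k v) ((n : ℤ) - 2 * k) (eigL k n v hv) m,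
                F.act_Ly, map_smul, map_smul, fy n v hv, fy n v hv,
                sw.actL k (2 * m + 1 - (n : ℤ)) n v hv, if_neg hnd]
              rw [show 2 * m + 1 - ((n : ℤ) - 2 * k) = 2 * m + 1 - (n : ℤ) + 2 * k by ring,
                show 2 * (k + m) + 1 - (n : ℤ) = 2 * m + 1 - (n : ℤ) + 2 * k by ring]
              congr 1
              push_cast
              ring
          · simp only [map_zero]
          · intro s1 s2 _ _ h1 h2
            simp only [map_add]
            rw [h1, h2]
          · intro z s1 _ h1
            simp only [map_smul]
            rw [h1]
        · intro s
          simp only [map_zero, LinearMap.zero_apply]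
        · intro v1 v2 h1 h2 s
          simp only [map_add, LinearMap.add_apply]
          rw [h1 s, h2 s]
      exact main v (hvtop v) s
    · intro w1 w2 h1 h2
      simp only [map_add]
      rw [h1, h2]
  -- commutation with G
  have commG : ∀ (k : ℤ) (w : T.carrier), f (T.G k w) = Sh.G k (f w) := by
    intro k w
    refine tw.isTensor.inductionOn
      (motive := fun w => f (T.G k w) = Sh.G k (f w)) w ?_ ?_ ?_
    · simp only [map_zero]
    · intro v s
      have main : ∀ v' ∈ (⨆ n, D n), ∀ s : S.carrier,
          f (T.G k (tw.t v' s)) = Sh.G k (f (tw.t v' s)) := by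
        intro v' hv'
        refine Submodule.iSup_induction (motive := fun v' => ∀ s : S.carrier,
          f (T.G k (tw.t v' s)) = Sh.G k (f (tw.t v' s))) D hv' ?_ ?_ ?_
        · intro n v hv s
          have hGx : ∀ m : ℤ, f (tw.t (V.G k v) (F.x m))
              = sw.ι (2 * m - (n : ℤ) + 2 * k + 1) (V.G k v) := by
            intro m
            rw [fxZ (V.G k v) ((n : ℤ) - 2 * k - 1) (eigG k n v hv) m]
            congr 1
            ring
          have hGy : ∀ m : ℤ, f (tw.t (V.G k v) (F.y m))
              = sw.ι (2 * m + 1 - (n : ℤ) + 2 * k + 1) (V.G k v) := by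
            intro m
            rw [fyZ (V.G k v) ((n : ℤ) - 2 * k - 1) (eigG k n v hv) m]
            congr 1
            ring
          refine Submodule.span_induction
            (p := fun s _ => f (T.G k (tw.t v s)) = Sh.G k (f (tw.t v s)))
            ?_ ?_ ?_ ?_ (hstop s)
          · rcases Nat.even_or_odd n with hpar | hpar
            · have hve : v ∈ V.even := hV.even_part n hpar hv
              rintro s (⟨m, rfl⟩ | ⟨m, rfl⟩)
              · have hdvd : (2 : ℤ) ∣ (2 * m - (n : ℤ) - n) := ⟨m - n, by ring⟩
                rw [tw.actG_even k v hve, map_add, hGx, F.act_Gx, fy n v hv,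
                  fx n v hv, sw.actG k (2 * m - (n : ℤ)) n v hv, if_pos hdvd,
                  hpar.neg_one_pow, mul_one, one_smul]
                rw [show 2 * (k + m) + 1 - (n : ℤ) = 2 * m - (n : ℤ) + 2 * k + 1 by ring]
              · have hnd : ¬ (2 : ℤ) ∣ (2 * m + 1 - (n : ℤ) - n) := by
                  rintro ⟨cc, hcc⟩; omega
                rw [tw.actG_even k v hve, map_add, hGy, F.act_Gy, map_smul, map_smul,
                  fx n v hv, fy n v hv, sw.actG k (2 * m + 1 - (n : ℤ)) n v hv,
                  if_neg hnd, hpar.neg_one_pow, one_mul]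
                rw [show 2 * (k + m + 1) - (n : ℤ) = 2 * m + 1 - (n : ℤ) + 2 * k + 1 by
                  ring]
                congr 1
                push_cast
                ring
            · have hvo : v ∈ V.odd := hV.odd_part n hpar hv
              rintro s (⟨m, rfl⟩ | ⟨m, rfl⟩)
              · have hdvd : (2 : ℤ) ∣ (2 * m - (n : ℤ) - n) := ⟨m - n, by ring⟩
                rw [tw.actG_odd k v hvo, map_sub, hGx, F.act_Gx, fy n v hv,
                  fx n v hv, sw.actG k (2 * m - (n : ℤ)) n v hv, if_pos hdvd,
                  hpar.neg_one_pow, mul_one, neg_one_smul]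
                rw [show 2 * (k + m) + 1 - (n : ℤ) = 2 * m - (n : ℤ) + 2 * k + 1 by ring,
                  sub_eq_add_neg]
              · have hnd : ¬ (2 : ℤ) ∣ (2 * m + 1 - (n : ℤ) - n) := by
                  rintro ⟨cc, hcc⟩; omega
                rw [tw.actG_odd k v hvo, map_sub, hGy, F.act_Gy, map_smul, map_smul,
                  fx n v hv, fy n v hv, sw.actG k (2 * m + 1 - (n : ℤ)) n v hv,
                  if_neg hnd, hpar.neg_one_pow]
                rw [show 2 * (k + m + 1) - (n : ℤ) = 2 * m + 1 - (n : ℤ) + 2 * k + 1 by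
                  ring, sub_eq_add_neg, ← neg_smul]
                congr 1
                push_cast
                ring
          · simp only [map_zero]
          · intro s1 s2 _ _ h1 h2
            simp only [map_add]
            rw [h1, h2]
          · intro z s1 _ h1
            simp only [map_smul]
            rw [h1]
        · intro s
          simp only [map_zero, LinearMap.zero_apply]
        · intro v1 v2 h1 h2 s
          simp only [map_add, LinearMap.add_apply]
          rw [h1 s, h2 s]
      exact main v (hvtop v) s
    · intro w1 w2 h1 h2
      simp only [map_add]
      rw [h1, h2]
  exact ⟨f, fun n v hv m => ⟨fx n v hv m, fy n v hv m⟩, hbij, commL, commG⟩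
end
end

section
/- Let V be a highest weight module over the Neveu–Schwarz algebra with highest weight vector u of highest weight (c, h), decomposed as V = ⨁_{n ∈ ℕ} V_{h−n/2} as in the grading assumption, and take (a, b) = (1/2, 1/2). Then the subspace of the shifted module V ⊗ ℂ[t^{±1/2}] spanned by all vectors v ⊗ t^{d−1/2} with v ∈ V_{h+d} (d ∈ {0, −1/2, −1, −3/2, …}) is a submodule, and the linear map sending v ∈ V_{h+d} to v ⊗ t^{d−1/2} is an isomorphism of Neveu–Schwarz modules from V onto this submodule. -/
noncomputable section

open Submodule

set_option maxHeartbeats 1000000 in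
set_option synthInstance.maxHeartbeats 400000 in
open scoped DirectSum in
/-- for `(a,b) = (1/2,1/2)`, the subspace of the shifted
module `V ⊗ ℂ[t^{±1/2}]` spanned by the vectors `v ⊗ t^{d-1/2}` with
`v ∈ V_{h+d}` (i.e. `ι (-(n+1)) v` for `v ∈ D n`) is a submodule, and
`v ↦ v ⊗ t^{d-1/2}` is an isomorphism of Neveu–Schwarz modules from `V`
onto this submodule. -/
theorem shifted_copy_of_V (c h : ℂ)
    (V : NSMod c) (u : V.carrier) (D : ℕ → Submodule ℂ V.carrier)
    (hV : GradedHW h V u D)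
    (Sh : NSMod c) (sw : ShiftedWitness (1 / 2) (1 / 2) V D Sh.toPreNSMod) :
    Sh.IsSubmodule
      (Submodule.span ℂ
        (⋃ n : ℕ, sw.ι (-(n : ℤ) - 1) '' (D n : Set V.carrier))) ∧
    ∃ f : V.carrier →ₗ[ℂ] Sh.carrier,
      (∀ (n : ℕ), ∀ v ∈ D n, f v = sw.ι (-(n : ℤ) - 1) v) ∧
      Function.Injective f ∧
      LinearMap.range f
        = Submodule.span ℂ
            (⋃ n : ℕ, sw.ι (-(n : ℤ) - 1) '' (D n : Set V.carrier)) ∧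
      (∀ (k : ℤ) (v : V.carrier), f (V.L k v) = Sh.L k (f v)) ∧
      (∀ (k : ℤ) (v : V.carrier), f (V.G k v) = Sh.G k (f v)) := by
  classical
  set Gen : Set Sh.carrier :=
    ⋃ n : ℕ, sw.ι (-(n : ℤ) - 1) '' (D n : Set V.carrier) with hGen
  set e : (⨁ n, D n) ≃ₗ[ℂ] V.carrier :=
    LinearEquiv.ofBijective (DirectSum.coeLinearMap D) hV.internal with he
  have heof : ∀ (n : ℕ) (z : D n),
      e (DirectSum.of (fun m => D m) n z) = (z : V.carrier) := by
    intro n z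
    rw [he]; exact DirectSum.coeLinearMap_of D n z
  have hsymmD : ∀ (n : ℕ) (v : V.carrier) (hv : v ∈ D n),
      e.symm v = DirectSum.of (fun m => D m) n ⟨v, hv⟩ := by
    intro n v hv
    apply e.injective
    rw [e.apply_symm_apply, heof]
  -- L₀ acts on the m-th component of any vector by the scalar h - m/2
  have hL0comp : ∀ (m : ℕ) (x : ⨁ n, D n),
      (e.symm (V.L 0 (e x))) m = (h - (m : ℂ) / 2) • x m := by
    intro m x
    induction x using DirectSum.induction_on with
    | zero =>
        simp only [LinearEquiv.map_zero, map_zero, DirectSum.zero_apply, smul_zero]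
    | of j z =>
        rw [heof j z, hV.eig j (z : V.carrier) z.2, map_smul,
          hsymmD j (z : V.carrier) z.2, DirectSum.smul_apply]
        by_cases hmj : m = j
        · subst hmj
          rw [DirectSum.of_eq_same]
        · rw [DirectSum.of_eq_of_ne _ _ _ hmj, smul_zero, smul_zero]
    | add x y hx hy =>
        rw [map_add, map_add, map_add, DirectSum.add_apply, DirectSum.add_apply,
          hx, hy, smul_add]
  -- an L₀-eigenvector whose eigenvalue differs from h - m/2 has zero m-component
  have heig0 : ∀ (μ : ℂ) (w : V.carrier), V.L 0 w = μ • w →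
      ∀ m : ℕ, μ ≠ h - (m : ℂ) / 2 → (e.symm w) m = 0 := by
    intro μ w hw m hne
    have h1 := hL0comp m (e.symm w)
    rw [e.apply_symm_apply, hw, map_smul, DirectSum.smul_apply] at h1
    have h3 : (μ - (h - (m : ℂ) / 2)) • (e.symm w) m = 0 := by
      rw [sub_smul, h1, sub_self]
    exact (smul_eq_zero.mp h3).resolve_left (sub_ne_zero.mpr hne)
  -- an L₀-eigenvector with eigenvalue h - M/2 lies in D M
  have hmem : ∀ (μ : ℂ) (w : V.carrier), V.L 0 w = μ • w →
      ∀ M : ℕ, μ = h - (M : ℂ) / 2 → w ∈ D M := by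
    intro μ w hw M hμ
    have hx : ∀ m : ℕ, m ≠ M → (e.symm w) m = 0 := by
      intro m hm
      refine heig0 μ w hw m ?_
      rw [hμ]
      intro hc
      have h5 : (M : ℂ) = (m : ℂ) := by linear_combination (-2 : ℂ) * hc
      exact hm (Nat.cast_injective h5.symm)
    have hxeq : e.symm w = DirectSum.of (fun m => D m) M ((e.symm w) M) := by
      refine DFinsupp.ext fun m => ?_
      by_cases hm : m = M
      · subst hm; rw [DirectSum.of_eq_same]
      · rw [DirectSum.of_eq_of_ne _ _ _ hm, hx m hm]
    have hw' : w = (((e.symm w) M : V.carrier)) := by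
      conv_lhs => rw [← e.apply_symm_apply w, hxeq]
      rw [heof]
    rw [hw']
    exact ((e.symm w) M).2
  -- eigenvalue of L k on D n
  have hLk : ∀ (k : ℤ) (n : ℕ) (v : V.carrier), v ∈ D n →
      V.L 0 (V.L k v) = (h - (n : ℂ) / 2 + (k : ℂ)) • V.L k v := by
    intro k n v hv
    have h1 := V.rel_LL 0 k v
    rw [hV.eig n v hv, map_smul, sub_eq_iff_eq_add] at h1
    rw [h1]
    have h2 : (if (0 : ℤ) + k = 0
        then ((((0 : ℤ) : ℂ)) ^ 3 - ((0 : ℤ) : ℂ)) / 12 * c else 0) = 0 := by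
      split <;> norm_num
    rw [h2, zero_smul, add_zero, zero_add]
    push_cast
    module
  have hGk : ∀ (k : ℤ) (n : ℕ) (v : V.carrier), v ∈ D n →
      V.L 0 (V.G k v) = (h - (n : ℂ) / 2 + (k : ℂ) + 1 / 2) • V.G k v := by
    intro k n v hv
    have h1 := V.rel_LG 0 k v
    rw [hV.eig n v hv, map_smul, sub_eq_iff_eq_add] at h1
    rw [h1, zero_add]
    push_cast
    module
  -- membership / vanishing for L k and G k
  have hLmem : ∀ (k : ℤ) (n : ℕ) (v : V.carrier), v ∈ D n →
      ∀ M : ℕ, (M : ℤ) = (n : ℤ) - 2 * k → V.L k v ∈ D M := by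
    intro k n v hv M hM
    refine hmem _ _ (hLk k n v hv) M ?_
    have h5 : (M : ℂ) = (n : ℂ) - 2 * (k : ℂ) := by exact_mod_cast hM
    rw [h5]; ring
  have hLzero : ∀ (k : ℤ) (n : ℕ) (v : V.carrier), v ∈ D n →
      (n : ℤ) - 2 * k < 0 → V.L k v = 0 := by
    intro k n v hv hneg
    have hall : ∀ m, (e.symm (V.L k v)) m = 0 := by
      intro m
      refine heig0 _ _ (hLk k n v hv) m ?_
      intro hc
      have h5 : ((m : ℤ) : ℂ) = (((n : ℤ) - 2 * k : ℤ) : ℂ) := by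
        push_cast
        linear_combination (2 : ℂ) * hc
      have h6 : (m : ℤ) = (n : ℤ) - 2 * k := by exact_mod_cast h5
      omega
    have hz : e.symm (V.L k v) = 0 := DFinsupp.ext hall
    calc V.L k v = e (e.symm (V.L k v)) := (e.apply_symm_apply _).symm
      _ = e 0 := by rw [hz]
      _ = 0 := e.map_zero
  have hGmem : ∀ (k : ℤ) (n : ℕ) (v : V.carrier), v ∈ D n →
      ∀ M : ℕ, (M : ℤ) = (n : ℤ) - 2 * k - 1 → V.G k v ∈ D M := by
    intro k n v hv M hM
    refine hmem _ _ (hGk k n v hv) M ?_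
    have h5 : (M : ℂ) = (n : ℂ) - 2 * (k : ℂ) - 1 := by
      exact_mod_cast hM
    rw [h5]; ring
  have hGzero : ∀ (k : ℤ) (n : ℕ) (v : V.carrier), v ∈ D n →
      (n : ℤ) - 2 * k - 1 < 0 → V.G k v = 0 := by
    intro k n v hv hneg
    have hall : ∀ m, (e.symm (V.G k v)) m = 0 := by
      intro m
      refine heig0 _ _ (hGk k n v hv) m ?_
      intro hc
      have h5 : ((m : ℤ) : ℂ) = (((n : ℤ) - 2 * k - 1 : ℤ) : ℂ) := by
        push_cast
        linear_combination (2 : ℂ) * hc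
      have h6 : (m : ℤ) = (n : ℤ) - 2 * k - 1 := by exact_mod_cast h5
      omega
    have hz : e.symm (V.G k v) = 0 := DFinsupp.ext hall
    calc V.G k v = e (e.symm (V.G k v)) := (e.apply_symm_apply _).symm
      _ = e 0 := by rw [hz]
      _ = 0 := e.map_zero
  -- the action on the distinguished vectors has no scalar correction term
  have hodd : ∀ n : ℕ, ¬ (2 : ℤ) ∣ (-(n : ℤ) - 1 - (n : ℤ)) := by
    intro n
    omega
  have keyL : ∀ (k : ℤ) (n : ℕ) (v : V.carrier), v ∈ D n →
      Sh.L k (sw.ι (-(n : ℤ) - 1) v) = sw.ι (-(n : ℤ) - 1 + 2 * k) (V.L k v) := by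
    intro k n v hv
    rw [sw.actL k (-(n : ℤ) - 1) n v hv, if_neg (hodd n)]
    have hc : (1 : ℂ) / 2 + ((-(n : ℤ) - 1 : ℤ) : ℂ) / 2
        + (k : ℂ) * ((1 : ℂ) / 2 - 1 / 2) + (n : ℂ) / 2 = 0 := by
      push_cast; ring
    rw [hc, zero_smul, add_zero]
  have keyG : ∀ (k : ℤ) (n : ℕ) (v : V.carrier), v ∈ D n →
      Sh.G k (sw.ι (-(n : ℤ) - 1) v)
        = sw.ι (-(n : ℤ) - 1 + 2 * k + 1) (V.G k v) := by
    intro k n v hv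
    rw [sw.actG k (-(n : ℤ) - 1) n v hv, if_neg (hodd n)]
    have hc : (-1 : ℂ) ^ n * ((1 : ℂ) / 2 + ((-(n : ℤ) - 1 : ℤ) : ℂ) / 2
        + (2 * (k : ℂ) + 1) * ((1 : ℂ) / 2 - 1 / 2) + (n : ℂ) / 2) = 0 := by
      push_cast; ring
    rw [hc, zero_smul, add_zero]
  -- generators are stable
  have hstabL : ∀ (k : ℤ) (n : ℕ) (v : V.carrier), v ∈ D n →
      Sh.L k (sw.ι (-(n : ℤ) - 1) v) ∈ Submodule.span ℂ Gen := by
    intro k n v hv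
    rw [keyL k n v hv]
    by_cases hnk : 0 ≤ (n : ℤ) - 2 * k
    · have hM : ((((n : ℤ) - 2 * k).toNat : ℤ)) = (n : ℤ) - 2 * k :=
        Int.toNat_of_nonneg hnk
      have hmem' := hLmem k n v hv _ hM
      have hidx : -(n : ℤ) - 1 + 2 * k = -((((n : ℤ) - 2 * k).toNat : ℤ)) - 1 := by
        omega
      rw [hidx]
      exact Submodule.subset_span
        (Set.mem_iUnion.mpr ⟨_, Set.mem_image_of_mem _ hmem'⟩)
    · rw [hLzero k n v hv (by omega), map_zero]
      exact zero_mem _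
  have hstabG : ∀ (k : ℤ) (n : ℕ) (v : V.carrier), v ∈ D n →
      Sh.G k (sw.ι (-(n : ℤ) - 1) v) ∈ Submodule.span ℂ Gen := by
    intro k n v hv
    rw [keyG k n v hv]
    by_cases hnk : 0 ≤ (n : ℤ) - 2 * k - 1
    · have hM : ((((n : ℤ) - 2 * k - 1).toNat : ℤ)) = (n : ℤ) - 2 * k - 1 :=
        Int.toNat_of_nonneg hnk
      have hmem' := hGmem k n v hv _ hM
      have hidx : -(n : ℤ) - 1 + 2 * k + 1
          = -((((n : ℤ) - 2 * k - 1).toNat : ℤ)) - 1 := by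
        omega
      rw [hidx]
      exact Submodule.subset_span
        (Set.mem_iUnion.mpr ⟨_, Set.mem_image_of_mem _ hmem'⟩)
    · rw [hGzero k n v hv (by omega), map_zero]
      exact zero_mem _
  constructor
  · constructor
    · intro k w hw
      induction hw using Submodule.span_induction with
      | mem x hx =>
          rw [Set.mem_iUnion] at hx
          obtain ⟨n, v, hv, rfl⟩ := hx
          exact hstabL k n v hv
      | zero => rw [map_zero]; exact zero_mem _
      | add x y hx hy ihx ihy => rw [map_add]; exact add_mem ihx ihy
      | smul a x hx ihx => rw [map_smul]; exact Submodule.smul_mem _ a ihx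
    · intro k w hw
      induction hw using Submodule.span_induction with
      | mem x hx =>
          rw [Set.mem_iUnion] at hx
          obtain ⟨n, v, hv, rfl⟩ := hx
          exact hstabG k n v hv
      | zero => rw [map_zero]; exact zero_mem _
      | add x y hx hy ihx ihy => rw [map_add]; exact add_mem ihx ihy
      | smul a x hx ihx => rw [map_smul]; exact Submodule.smul_mem _ a ihx
  · -- the isomorphism onto its image
    set F : (⨁ n, D n) →ₗ[ℂ] Sh.carrier :=
      DirectSum.toModule ℂ ℕ Sh.carrier
        (fun n => (sw.ι (-(n : ℤ) - 1)).comp (D n).subtype) with hF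
    have hfD' : ∀ (n : ℕ) (v : V.carrier), v ∈ D n →
        F (e.symm v) = sw.ι (-(n : ℤ) - 1) v := by
      intro n v hv
      rw [hsymmD n v hv, ← DirectSum.lof_eq_of ℂ, hF, DirectSum.toModule_lof]
      rfl
    set g : (⨁ n, D n) →ₗ[ℂ] (ℤ →₀ V.carrier) :=
      DirectSum.toModule ℂ ℕ (ℤ →₀ V.carrier)
        (fun n => (Finsupp.lsingle (-(n : ℤ) - 1)).comp (D n).subtype) with hg
    have hFg : F = (Finsupp.lsum ℂ sw.ι).comp g := by
      apply DirectSum.linearMap_ext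
      intro n
      ext z
      simp only [LinearMap.comp_apply, hF, hg, DirectSum.toModule_lof,
        Finsupp.lsingle_apply, Finsupp.lsum_single]
    have hgcomp : ∀ (x : ⨁ n, D n) (n : ℕ),
        (g x) (-(n : ℤ) - 1) = ((x n : V.carrier)) := by
      intro x n
      induction x using DirectSum.induction_on with
      | zero => simp
      | of j z =>
          rw [← DirectSum.lof_eq_of ℂ, hg, DirectSum.toModule_lof]
          by_cases hnj : n = j
          · subst hnj
            simp [DirectSum.lof_eq_of, DirectSum.of_eq_same]
          · have hne : (-(j : ℤ) - 1) ≠ (-(n : ℤ) - 1) := by omega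
            simp [Finsupp.single_eq_of_ne hne.symm, DirectSum.lof_eq_of,
              DirectSum.of_eq_of_ne _ _ _ hnj]
      | add x y hx hy =>
          rw [map_add, Finsupp.add_apply, hx, hy, DirectSum.add_apply,
            Submodule.coe_add]
    have hg0 : ∀ x : ⨁ n, D n, g x = 0 → x = 0 := by
      intro x hx
      refine DFinsupp.ext fun n => ?_
      have h1 : ((x n : V.carrier)) = 0 := by
        rw [← hgcomp x n, hx]
        rfl
      exact Subtype.ext h1
    have hFinj : ∀ x : ⨁ n, D n, F x = 0 → x = 0 := by
      intro x hx
      rw [hFg] at hx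
      have h1 : g x = 0 := by
        apply sw.directSum.injective
        rw [map_zero]
        exact hx
      exact hg0 x h1
    have hFin : ∀ x : ⨁ n, D n, F x ∈ Submodule.span ℂ Gen := by
      intro x
      induction x using DirectSum.induction_on with
      | zero => rw [map_zero]; exact zero_mem _
      | of n z =>
          rw [← DirectSum.lof_eq_of ℂ, hF, DirectSum.toModule_lof]
          exact Submodule.subset_span
            (Set.mem_iUnion.mpr ⟨n, ⟨(z : V.carrier), z.2, rfl⟩⟩)
      | add x y hx hy => rw [map_add]; exact add_mem hx hy
    refine ⟨F.comp (e.symm : V.carrier →ₗ[ℂ] ⨁ n, D n), ?_, ?_, ?_, ?_, ?_⟩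
    · intro n v hv
      rw [LinearMap.comp_apply, LinearEquiv.coe_coe]
      exact hfD' n v hv
    · intro v w hvw
      simp only [LinearMap.comp_apply, LinearEquiv.coe_coe] at hvw
      have h1 : F (e.symm v - e.symm w) = 0 := by
        rw [map_sub, hvw, sub_self]
      have h3 : e.symm v = e.symm w := sub_eq_zero.mp (hFinj _ h1)
      exact e.symm.injective h3
    · apply le_antisymm
      · rintro _ ⟨v, rfl⟩
        rw [LinearMap.comp_apply, LinearEquiv.coe_coe]
        exact hFin (e.symm v)
      · rw [Submodule.span_le]
        intro w hw
        rw [Set.mem_iUnion] at hw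
        obtain ⟨n, v, hv, rfl⟩ := hw
        refine ⟨v, ?_⟩
        rw [LinearMap.comp_apply, LinearEquiv.coe_coe]
        exact hfD' n v hv
    · intro k v
      simp only [LinearMap.comp_apply, LinearEquiv.coe_coe]
      obtain ⟨x, rfl⟩ := e.surjective v
      induction x using DirectSum.induction_on with
      | zero =>
          simp only [LinearEquiv.map_zero, map_zero]
      | of n z =>
          rw [heof n z, hfD' n (z : V.carrier) z.2, keyL k n (z : V.carrier) z.2]
          by_cases hnk : 0 ≤ (n : ℤ) - 2 * k
          · have hM : ((((n : ℤ) - 2 * k).toNat : ℤ)) = (n : ℤ) - 2 * k :=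
              Int.toNat_of_nonneg hnk
            rw [hfD' _ _ (hLmem k n (z : V.carrier) z.2 _ hM)]
            have hidx : -((((n : ℤ) - 2 * k).toNat : ℤ)) - 1
                = -(n : ℤ) - 1 + 2 * k := by omega
            rw [hidx]
          · rw [hLzero k n (z : V.carrier) z.2 (by omega), e.symm.map_zero,
              map_zero, map_zero]
      | add x y hx hy =>
          simp only [LinearEquiv.map_add, map_add, hx, hy]
    · intro k v
      simp only [LinearMap.comp_apply, LinearEquiv.coe_coe]
      obtain ⟨x, rfl⟩ := e.surjective v
      induction x using DirectSum.induction_on with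
      | zero =>
          simp only [LinearEquiv.map_zero, map_zero]
      | of n z =>
          rw [heof n z, hfD' n (z : V.carrier) z.2, keyG k n (z : V.carrier) z.2]
          by_cases hnk : 0 ≤ (n : ℤ) - 2 * k - 1
          · have hM : ((((n : ℤ) - 2 * k - 1).toNat : ℤ)) = (n : ℤ) - 2 * k - 1 :=
              Int.toNat_of_nonneg hnk
            rw [hfD' _ _ (hGmem k n (z : V.carrier) z.2 _ hM)]
            have hidx : -((((n : ℤ) - 2 * k - 1).toNat : ℤ)) - 1
                = -(n : ℤ) - 1 + 2 * k + 1 := by omega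
            rw [hidx]
          · rw [hGzero k n (z : V.carrier) z.2 (by omega), e.symm.map_zero,
              map_zero, map_zero]
      | add x y hx hy =>
          simp only [LinearEquiv.map_add, map_add, hx, hy]
end
end
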